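/- arXiv:2411.02163 — 3 statements merged into one kernel-verified Lean document; each statement's English description precedes it below -/
import Mathlib

section
/- The operator Q = Σᵢ (-1)ⁱ (h_X Xᵢ + h_Y Yᵢ)(h_X Xᵢ₊₁ + h_Y Yᵢ₊₁) commutes with the Hamiltonian H = Σᵢ (J_X (XᵢXᵢ₊₁ - (h_Y/h_X)² YᵢYᵢ₊₁) + h_X Xᵢ + h_Y Yᵢ) on a periodic chain of even length N, provided h_X ≠ 0. -/
open Complex
open scoped Classical

noncomputable def σx : Matrix (Fin 2) (Fin 2) ℂ := !![0, 1; 1, 0]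
noncomputable def σy : Matrix (Fin 2) (Fin 2) ℂ := !![0, -I; I, 0]
noncomputable def σz : Matrix (Fin 2) (Fin 2) ℂ := !![1, 0; 0, -1]

/-- The single-site operator `M` acting on site `i` of a spin-1/2 chain of `N` sites
(tensored with the identity on all other sites). -/
noncomputable def pauliAt (N : ℕ) (i : Fin N) (M : Matrix (Fin 2) (Fin 2) ℂ) :
    Matrix (Fin N → Fin 2) (Fin N → Fin 2) ℂ :=
  fun f g => M (f i) (g i) * if ∀ j, j ≠ i → f j = g j then 1 else 0

lemma pauliAt_apply (N : ℕ) (i : Fin N) (M : Matrix (Fin 2) (Fin 2) ℂ) (f g : Fin N → Fin 2) :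
    pauliAt N i M f g = M (f i) (g i) * if ∀ j, j ≠ i → f j = g j then 1 else 0 := rfl

lemma pauliAt_mul_same (N : ℕ) (i : Fin N) (M M' : Matrix (Fin 2) (Fin 2) ℂ) :
    pauliAt N i M * pauliAt N i M' = pauliAt N i (M * M') := by
  ext f g
  rw [Matrix.mul_apply]
  have hinj : Function.Injective (fun x : Fin 2 => Function.update f i x) := by
    intro x y hxy
    have := congrFun hxy i
    simpa using this
  rw [show (Finset.univ : Finset (Fin N → Fin 2)) =
      (Finset.univ.image (fun x : Fin 2 => Function.update f i x)) ∪
      ((Finset.univ : Finset (Fin N → Fin 2)) \ (Finset.univ.image (fun x : Fin 2 => Function.update f i x))) from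
      (Finset.union_sdiff_of_subset (Finset.subset_univ _)).symm]
  rw [Finset.sum_union (Finset.disjoint_sdiff)]
  have h2 : ∑ h ∈ (Finset.univ : Finset (Fin N → Fin 2)) \ (Finset.univ.image (fun x : Fin 2 => Function.update f i x)), pauliAt N i M f h * pauliAt N i M' h g = 0 := by
    apply Finset.sum_eq_zero
    intro h hh
    simp only [Finset.mem_sdiff, Finset.mem_image, Finset.mem_univ, true_and] at hh
    have hne : ¬ ∀ j, j ≠ i → f j = h j := by
      intro hall
      exact hh ⟨h i, by funext j; by_cases hj : j = i <;> simp [Function.update, hj, fun hji => (hall j hji).symm] ⟩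
    rw [pauliAt_apply, if_neg hne, mul_zero, zero_mul]
  rw [h2, add_zero, Finset.sum_image (fun x _ y _ h => hinj h)]
  have hterm : ∀ x : Fin 2, pauliAt N i M f (Function.update f i x) * pauliAt N i M' (Function.update f i x) g
      = M (f i) x * M' x (g i) * (if ∀ j, j ≠ i → f j = g j then (1:ℂ) else 0) := by
    intro x
    rw [pauliAt_apply, pauliAt_apply]
    have e1 : (∀ j, j ≠ i → f j = Function.update f i x j) := fun j hj => by simp [Function.update, hj]
    have hiff : (∀ j, j ≠ i → Function.update f i x j = g j) ↔ (∀ j, j ≠ i → f j = g j) := by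
      constructor
      · intro h j hj; rw [← h j hj]; simp [Function.update, hj]
      · intro h j hj; simp [Function.update, hj]; exact h j hj
    rw [if_pos e1, Function.update_self, if_congr hiff rfl rfl]
    ring
  rw [Finset.sum_congr rfl (fun x _ => hterm x), pauliAt_apply, Matrix.mul_apply, Finset.sum_mul]

lemma pauliAt_mul_ne_apply (N : ℕ) {i j : Fin N} (hij : i ≠ j) (M M' : Matrix (Fin 2) (Fin 2) ℂ)
    (f g : Fin N → Fin 2) :
    (pauliAt N i M * pauliAt N j M') f g =
      M (f i) (g i) * M' (f j) (g j) *
        (if ∀ k, k ≠ i → k ≠ j → f k = g k then (1:ℂ) else 0) := by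
  rw [Matrix.mul_apply]
  rw [Finset.sum_eq_single (Function.update f i (g i))]
  · rw [pauliAt_apply, pauliAt_apply]
    have e1 : ∀ k, k ≠ i → f k = Function.update f i (g i) k := fun k hk => by
      simp [Function.update, hk]
    have hiff : (∀ k, k ≠ j → Function.update f i (g i) k = g k) ↔
        (∀ k, k ≠ i → k ≠ j → f k = g k) := by
      constructor
      · intro h k hki hkj; have := h k hkj; simpa [Function.update, hki] using this
      · intro h k hkj
        by_cases hki : k = i
        · subst hki; simp [Function.update]
        · simp only [Function.update, hki, dif_neg, dite_eq_ite, if_neg]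
          exact h k hki hkj
    rw [if_pos e1, Function.update_self, if_congr hiff rfl rfl]
    have hj' : Function.update f i (g i) j = f j := by
      simp [Function.update, hij.symm]
    rw [hj']; ring
  · intro h _ hne
    rw [pauliAt_apply, pauliAt_apply]
    by_cases c1 : ∀ k, k ≠ i → f k = h k
    · by_cases c2 : ∀ k, k ≠ j → h k = g k
      · exfalso; apply hne; funext k
        by_cases hk : k = i
        · subst hk; rw [Function.update_self]; exact c2 k hij
        · rw [show Function.update f i (g i) k = f k by simp [Function.update, hk]]
          exact (c1 k hk).symm
      · rw [if_neg c2, mul_zero, mul_zero]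
    · rw [if_neg c1, mul_zero, zero_mul]
  · intro hmem; exact absurd (Finset.mem_univ _) hmem

lemma pauliAt_comm (N : ℕ) {i j : Fin N} (hij : i ≠ j) (M M' : Matrix (Fin 2) (Fin 2) ℂ) :
    pauliAt N i M * pauliAt N j M' = pauliAt N j M' * pauliAt N i M := by
  ext f g
  rw [pauliAt_mul_ne_apply N hij, pauliAt_mul_ne_apply N hij.symm]
  have hc : (∀ k, k ≠ i → k ≠ j → f k = g k) ↔ (∀ k, k ≠ j → k ≠ i → f k = g k) :=
    ⟨fun h k a b => h k b a, fun h k a b => h k b a⟩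
  rw [if_congr hc rfl rfl]; ring

lemma pauliAt_one (N : ℕ) (i : Fin N) : pauliAt N i 1 = 1 := by
  ext f g
  rw [pauliAt_apply]
  by_cases hfg : f = g
  · subst hfg
    simp [Matrix.one_apply]
  · rw [Matrix.one_apply_ne hfg]
    by_cases h1 : f i = g i
    · have : ¬ ∀ j, j ≠ i → f j = g j := by
        intro hall
        apply hfg
        funext j
        by_cases hj : j = i
        · rw [hj]; exact h1
        · exact hall j hj
      rw [if_neg this, mul_zero]
    · rw [Matrix.one_apply_ne h1, zero_mul]

lemma pauliAt_add (N : ℕ) (i : Fin N) (M M' : Matrix (Fin 2) (Fin 2) ℂ) :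
    pauliAt N i (M + M') = pauliAt N i M + pauliAt N i M' := by
  ext f g
  simp only [Matrix.add_apply, pauliAt_apply]
  ring

lemma pauliAt_smul (N : ℕ) (i : Fin N) (c : ℂ) (M : Matrix (Fin 2) (Fin 2) ℂ) :
    pauliAt N i (c • M) = c • pauliAt N i M := by
  ext f g
  simp only [Matrix.smul_apply, pauliAt_apply, smul_eq_mul]
  ring

lemma pauliAt_sub (N : ℕ) (i : Fin N) (M M' : Matrix (Fin 2) (Fin 2) ℂ) :
    pauliAt N i (M - M') = pauliAt N i M - pauliAt N i M' := by
  ext f g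
  simp only [Matrix.sub_apply, pauliAt_apply]
  ring

section Helpers
variable {N : ℕ}

local notation "P" => pauliAt N

lemma k1 {s t : Fin N} (hts : t ≠ s) (X Y Z W : Matrix (Fin 2) (Fin 2) ℂ) :
    (P s X * P t Y) * (P s Z * P t W) = P s (X*Z) * P t (Y*W) := by
  calc (P s X * P t Y) * (P s Z * P t W)
      = P s X * ((P t Y * P s Z) * P t W) := by rw [mul_assoc, mul_assoc]
    _ = P s X * ((P s Z * P t Y) * P t W) := by rw [pauliAt_comm N hts]
    _ = (P s X * P s Z) * (P t Y * P t W) := by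
        rw [mul_assoc (P s Z), ← mul_assoc]
    _ = P s (X*Z) * P t (Y*W) := by rw [pauliAt_mul_same, pauliAt_mul_same]

lemma k2 (s t v : Fin N) (X Y Z W : Matrix (Fin 2) (Fin 2) ℂ) :
    (P s X * P t Y) * (P t Z * P v W) = P s X * P t (Y*Z) * P v W := by
  calc (P s X * P t Y) * (P t Z * P v W)
      = P s X * ((P t Y * P t Z) * P v W) := by rw [mul_assoc, mul_assoc]
    _ = P s X * (P t (Y*Z) * P v W) := by rw [pauliAt_mul_same]
    _ = P s X * P t (Y*Z) * P v W := by rw [mul_assoc]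

lemma k3 {s t v : Fin N} (hts : t ≠ s) (hvs : v ≠ s) (hvt : v ≠ t)
    (X Y Z W : Matrix (Fin 2) (Fin 2) ℂ) :
    (P t Z * P v W) * (P s X * P t Y) = P s X * P t (Z*Y) * P v W := by
  calc (P t Z * P v W) * (P s X * P t Y)
      = P t Z * ((P v W * P s X) * P t Y) := by rw [mul_assoc, mul_assoc]
    _ = P t Z * ((P s X * P v W) * P t Y) := by rw [pauliAt_comm N hvs]
    _ = P t Z * (P s X * (P t Y * P v W)) := by
        rw [mul_assoc (P s X), pauliAt_comm N hvt]
    _ = (P t Z * P s X) * (P t Y * P v W) := by rw [← mul_assoc]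
    _ = (P s X * P t Z) * (P t Y * P v W) := by rw [pauliAt_comm N hts]
    _ = P s X * ((P t Z * P t Y) * P v W) := by rw [mul_assoc, mul_assoc]
    _ = P s X * P t (Z*Y) * P v W := by rw [pauliAt_mul_same, mul_assoc]

lemma k3' {s t u : Fin N} (htu : t ≠ u) (hts : t ≠ s) (hsu : s ≠ u)
    (X Y Z W : Matrix (Fin 2) (Fin 2) ℂ) :
    (P s X * P t Y) * (P u Z * P s W) = P u Z * P s (X*W) * P t Y := by
  calc (P s X * P t Y) * (P u Z * P s W)
      = P s X * ((P t Y * P u Z) * P s W) := by rw [mul_assoc, mul_assoc]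
    _ = P s X * ((P u Z * P t Y) * P s W) := by rw [pauliAt_comm N htu]
    _ = P s X * (P u Z * (P s W * P t Y)) := by
        rw [mul_assoc (P u Z), pauliAt_comm N hts]
    _ = (P s X * P u Z) * (P s W * P t Y) := by rw [← mul_assoc]
    _ = (P u Z * P s X) * (P s W * P t Y) := by rw [pauliAt_comm N hsu]
    _ = P u Z * ((P s X * P s W) * P t Y) := by rw [mul_assoc, mul_assoc]
    _ = P u Z * P s (X*W) * P t Y := by rw [pauliAt_mul_same, mul_assoc]

lemma k4 {s t u v : Fin N} (hsu : s ≠ u) (hsv : s ≠ v) (htu : t ≠ u) (htv : t ≠ v)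
    (X Y Z W : Matrix (Fin 2) (Fin 2) ℂ) :
    (P s X * P t Y) * (P u Z * P v W) = (P u Z * P v W) * (P s X * P t Y) := by
  have c1 : Commute (P s X) (P u Z) := pauliAt_comm N hsu X Z
  have c2 : Commute (P s X) (P v W) := pauliAt_comm N hsv X W
  have c3 : Commute (P t Y) (P u Z) := pauliAt_comm N htu Y Z
  have c4 : Commute (P t Y) (P v W) := pauliAt_comm N htv Y W
  exact ((c1.mul_right c2).mul_left (c3.mul_right c4)).eq

end Helpers

noncomputable def opU (N : ℕ) [NeZero N] (A : Matrix (Fin 2) (Fin 2) ℂ) (i : Fin N) :=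
  pauliAt N i A * pauliAt N (i+1) A
noncomputable def opT (N : ℕ) [NeZero N] (A B : Matrix (Fin 2) (Fin 2) ℂ) (j : Fin N) :=
  pauliAt N j A * pauliAt N (j+1) B
noncomputable def opT' (N : ℕ) [NeZero N] (A B : Matrix (Fin 2) (Fin 2) ℂ) (j : Fin N) :=
  pauliAt N j B * pauliAt N (j+1) A
noncomputable def opZ (N : ℕ) (A B : Matrix (Fin 2) (Fin 2) ℂ) (a : ℂ) (k : Fin N) :=
  a • pauliAt N k (A*B) - a • pauliAt N k (B*A)
noncomputable def opV (N : ℕ) [NeZero N] (A B : Matrix (Fin 2) (Fin 2) ℂ) (k : Fin N) :=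
  pauliAt N k A * pauliAt N (k+1) (A*B) * pauliAt N (k+1+1) A
    - pauliAt N k A * pauliAt N (k+1) (B*A) * pauliAt N (k+1+1) A

section Main
variable {N : ℕ} [NeZero N]

lemma commut_pointwise (A B : Matrix (Fin 2) (Fin 2) ℂ) (a : ℂ) (hAA : A * A = a • 1)
    (h1 : ∀ k : Fin N, k + 1 ≠ k) (h2 : ∀ k : Fin N, k + 1 + 1 ≠ k) (i j : Fin N) :
    (opU N A i * opT N A B j - opT N A B j * opU N A i)
      + (opU N A i * opT' N A B j - opT' N A B j * opU N A i) =
    (if j = i then opZ N A B a i + opZ N A B a (i+1) else 0)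
      + (if j = i+1 then opV N A B i else 0)
      + (if j = i-1 then opV N A B (i-1) else 0) := by
  have e1 : i - 1 + 1 = i := by abel
  have e2 : i - 1 + 1 + 1 = i + 1 := by abel
  by_cases hji : j = i
  · subst hji
    rw [if_pos rfl, if_neg (fun h => h1 j h.symm),
        if_neg (fun h => h1 (j-1) (e1.trans h))]
    unfold opU opT opT' opZ
    rw [k1 (h1 j) A A A B, k1 (h1 j) A A B A, k1 (h1 j) A B A A, k1 (h1 j) B A A A]
    simp only [hAA, pauliAt_smul, pauliAt_one, smul_mul_assoc, mul_smul_comm, one_mul, mul_one]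
    abel
  · by_cases hjt : j = i + 1
    · subst hjt
      rw [if_neg hji, if_pos rfl, if_neg (fun h => h2 (i-1) (e2.trans h))]
      unfold opU opT opT' opV
      rw [k2 i (i+1) (i+1+1) A A A B, k2 i (i+1) (i+1+1) A A B A,
          k3 (h1 i) (h2 i) (h1 (i+1)) A A A B, k3 (h1 i) (h2 i) (h1 (i+1)) A A B A]
      abel
    · by_cases hju : j = i - 1
      · subst hju
        rw [if_neg hji, if_neg hjt, if_pos rfl]
        unfold opU opT opT' opV
        rw [e1]
        have d1 : i + 1 ≠ i - 1 := fun h => h2 (i-1) (e2.trans h)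
        have d2 : i ≠ i - 1 := fun h => h1 (i-1) (e1.trans h)
        rw [k3' d1 (h1 i) d2 A A A B, k3' d1 (h1 i) d2 A A B A,
            k2 (i-1) i (i+1) A B A A, k2 (i-1) i (i+1) B A A A]
        abel
      · rw [if_neg hji, if_neg hjt, if_neg hju]
        have d1 : i ≠ j := fun h => hji h.symm
        have d2 : i ≠ j + 1 := by
          intro h
          exact hju (by rw [h]; abel)
        have d3 : i + 1 ≠ j := fun h => hjt h.symm
        have d4 : i + 1 ≠ j + 1 := fun h => hji (by
          have := add_right_cancel h; exact this.symm)
        unfold opU opT opT'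
        rw [k4 d1 d2 d3 d4 A A A B, k4 d1 d2 d3 d4 A A B A]
        abel

end Main

section Main2
variable {N : ℕ} [NeZero N]

lemma innerSumComm (A B : Matrix (Fin 2) (Fin 2) ℂ) (a : ℂ) (hAA : A * A = a • 1)
    (h1 : ∀ k : Fin N, k + 1 ≠ k) (h2 : ∀ k : Fin N, k + 1 + 1 ≠ k) (i : Fin N) :
    ∑ j : Fin N, ((opU N A i * opT N A B j - opT N A B j * opU N A i)
      + (opU N A i * opT' N A B j - opT' N A B j * opU N A i)) =
    opZ N A B a i + opZ N A B a (i+1) + opV N A B (i-1) + opV N A B i := by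
  rw [Finset.sum_congr rfl (fun j _ => commut_pointwise A B a hAA h1 h2 i j)]
  rw [Finset.sum_add_distrib, Finset.sum_add_distrib]
  rw [Finset.sum_ite_eq' Finset.univ i (fun _ => opZ N A B a i + opZ N A B a (i+1)),
      Finset.sum_ite_eq' Finset.univ (i+1) (fun _ => opV N A B i),
      Finset.sum_ite_eq' Finset.univ (i-1) (fun _ => opV N A B (i-1))]
  simp only [Finset.mem_univ, if_true]
  abel

lemma field_comm (A : Matrix (Fin 2) (Fin 2) ℂ)
    (h1 : ∀ k : Fin N, k + 1 ≠ k) (i j : Fin N) :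
    opU N A i * pauliAt N j A = pauliAt N j A * opU N A i := by
  unfold opU
  by_cases hji : j = i
  · subst hji
    rw [mul_assoc, pauliAt_comm N (h1 j)]
  · by_cases hjt : j = i + 1
    · subst hjt
      rw [mul_assoc]
      conv_rhs => rw [← mul_assoc, pauliAt_comm N (h1 i), mul_assoc]
    · have c1 : Commute (pauliAt N i A) (pauliAt N j A) := pauliAt_comm N (Ne.symm hji) A A
      have c2 : Commute (pauliAt N (i+1) A) (pauliAt N j A) := pauliAt_comm N (Ne.symm hjt) A A
      exact (c1.mul_left c2).eq

lemma total_sum (hs : ∀ k : Fin N, (-1:ℂ)^(((k+1) : Fin N) : ℕ) = -(-1:ℂ)^(k:ℕ))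
    (Z V : Fin N → Matrix (Fin N → Fin 2) (Fin N → Fin 2) ℂ) :
    ∑ i : Fin N, (-1:ℂ)^(i:ℕ) • (Z i + Z (i+1) + V (i-1) + V i) = 0 := by
  have hZ : ∑ i : Fin N, (-1:ℂ)^(i:ℕ) • Z (i+1) = - ∑ i : Fin N, (-1:ℂ)^(i:ℕ) • Z i := by
    have h := Equiv.sum_comp (Equiv.addRight (1 : Fin N))
      (fun k : Fin N => (-1:ℂ)^(k:ℕ) • Z k)
    simp only [Equiv.coe_addRight] at h
    rw [← h, ← Finset.sum_neg_distrib]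
    exact Finset.sum_congr rfl (fun i _ => by rw [hs i, neg_smul, neg_neg])
  have hV : ∑ i : Fin N, (-1:ℂ)^(i:ℕ) • V (i-1) = - ∑ i : Fin N, (-1:ℂ)^(i:ℕ) • V i := by
    have h := Equiv.sum_comp (Equiv.addRight (1 : Fin N))
      (fun k : Fin N => (-1:ℂ)^(k:ℕ) • V (k-1))
    simp only [Equiv.coe_addRight] at h
    rw [← h]
    have e : ∀ i : Fin N, i + 1 - 1 = i := fun i => by abel
    rw [← Finset.sum_neg_distrib]
    refine (Finset.sum_congr rfl (fun i _ => ?_)).symm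
    rw [hs i, e i, neg_smul]
  calc ∑ i : Fin N, (-1:ℂ)^(i:ℕ) • (Z i + Z (i+1) + V (i-1) + V i)
      = ∑ i : Fin N, ((-1:ℂ)^(i:ℕ) • Z i + (-1:ℂ)^(i:ℕ) • Z (i+1)
          + (-1:ℂ)^(i:ℕ) • V (i-1) + (-1:ℂ)^(i:ℕ) • V i) := by
        exact Finset.sum_congr rfl (fun i _ => by simp only [smul_add])
    _ = (∑ i : Fin N, (-1:ℂ)^(i:ℕ) • Z i) + (∑ i : Fin N, (-1:ℂ)^(i:ℕ) • Z (i+1))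
          + (∑ i : Fin N, (-1:ℂ)^(i:ℕ) • V (i-1)) + (∑ i : Fin N, (-1:ℂ)^(i:ℕ) • V i) := by
        rw [Finset.sum_add_distrib, Finset.sum_add_distrib, Finset.sum_add_distrib]
    _ = 0 := by rw [hZ, hV]; abel

end Main2

lemma key_abstract {R : Type*} [Ring R] [Algebra ℂ R] {ι : Type*} [Fintype ι]
    (e : ι → ℂ) (κ c : ℂ) (U T T' PA D : ι → R)
    (hfield : ∀ i j, U i * PA j = PA j * U i)
    (hinner : ∀ i, ∑ j, ((U i * T j - T j * U i) + (U i * T' j - T' j * U i)) = D i)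
    (htot : ∑ i, (e i * κ) • D i = 0) :
    (∑ i, e i • U i) * (∑ j, (κ • T j + κ • T' j + c • PA j))
      = (∑ j, (κ • T j + κ • T' j + c • PA j)) * (∑ i, e i • U i) := by
  rw [Finset.sum_mul_sum]
  conv_rhs => rw [Finset.sum_mul_sum]; rw [Finset.sum_comm]
  rw [← sub_eq_zero, ← Finset.sum_sub_distrib]
  have hper : ∀ i j,
      (e i • U i) * (κ • T j + κ • T' j + c • PA j)
      - (κ • T j + κ • T' j + c • PA j) * (e i • U i)
      = (e i * κ) • ((U i * T j - T j * U i) + (U i * T' j - T' j * U i)) := by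
    intro i j
    have hf := hfield i j
    simp only [smul_mul_assoc, mul_smul_comm, mul_add, add_mul, smul_add, smul_sub, smul_smul]
    rw [hf]
    module
  calc ∑ i, (∑ j, (e i • U i) * (κ • T j + κ • T' j + c • PA j)
        - ∑ j, (κ • T j + κ • T' j + c • PA j) * (e i • U i))
      = ∑ i, (e i * κ) • D i := by
        refine Finset.sum_congr rfl (fun i _ => ?_)
        rw [← Finset.sum_sub_distrib, Finset.sum_congr rfl (fun j _ => hper i j),
          ← Finset.smul_sum, hinner i]
    _ = 0 := htot

set_option maxHeartbeats 1000000

theorem staggered_XY_quadratic_commutes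
    (N : ℕ) [NeZero N] (hN : Even N) (JX hX hY : ℝ) (hhX : hX ≠ 0)
    (H : Matrix (Fin N → Fin 2) (Fin N → Fin 2) ℂ)
    (hH : H = ∑ i : Fin N,
      ((JX : ℂ) • (pauliAt N i σx * pauliAt N (i + 1) σx
          - ((hY / hX : ℝ) : ℂ) ^ 2 • (pauliAt N i σy * pauliAt N (i + 1) σy))
        + (hX : ℂ) • pauliAt N i σx + (hY : ℂ) • pauliAt N i σy))
    (Q : Matrix (Fin N → Fin 2) (Fin N → Fin 2) ℂ)
    (hQ : Q = ∑ i : Fin N, ((-1 : ℂ) ^ (i : ℕ)) •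
      (((hX : ℂ) • pauliAt N i σx + (hY : ℂ) • pauliAt N i σy)
        * ((hX : ℂ) • pauliAt N (i + 1) σx + (hY : ℂ) • pauliAt N (i + 1) σy))) :
    Q * H = H * Q := by
  classical
  have hNpos : 0 < N := Nat.pos_of_ne_zero (NeZero.ne N)
  have hN2 : 2 ≤ N := by obtain ⟨m, hm⟩ := hN; omega
  set A : Matrix (Fin 2) (Fin 2) ℂ := (hX:ℂ) • σx + (hY:ℂ) • σy with hA
  set B : Matrix (Fin 2) (Fin 2) ℂ := (hX:ℂ) • σx - (hY:ℂ) • σy with hB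
  have hexpA : ∀ k : Fin N, pauliAt N k A = (hX:ℂ) • pauliAt N k σx + (hY:ℂ) • pauliAt N k σy := by
    intro k; rw [hA, pauliAt_add, pauliAt_smul, pauliAt_smul]
  have hexpB : ∀ k : Fin N, pauliAt N k B = (hX:ℂ) • pauliAt N k σx - (hY:ℂ) • pauliAt N k σy := by
    intro k; rw [hB, pauliAt_sub, pauliAt_smul, pauliAt_smul]
  have hQ' : Q = ∑ i : Fin N, ((-1:ℂ)^(i:ℕ)) • opU N A i := by
    rw [hQ]
    refine Finset.sum_congr rfl (fun i _ => ?_)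
    simp only [opU, hexpA]
  have h1 : ∀ k : Fin N, k + 1 ≠ k := by
    intro k h
    have h0 : (1 : Fin N) = 0 := by
      have : k + 1 = k + 0 := by rw [add_zero]; exact h
      exact add_left_cancel this
    have hv := congrArg Fin.val h0
    rw [Fin.val_one', Fin.val_zero] at hv
    rw [Nat.mod_eq_of_lt (by omega)] at hv
    omega
  by_cases hNtwo : N = 2
  · subst hNtwo
    have hQ0 : Q = 0 := by
      rw [hQ', Fin.sum_univ_two]
      have a01 : (0:Fin 2)+1 = 1 := rfl
      have a10 : (1:Fin 2)+1 = 0 := rfl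
      simp only [opU, a01, a10, Fin.val_zero, Fin.val_one, pow_zero, pow_one, one_smul]
      have h10 : (1 : Fin 2) ≠ 0 := one_ne_zero
      rw [pauliAt_comm 2 h10 A A]
      simp
    rw [hQ0, zero_mul, mul_zero]
  · have hN4 : 4 ≤ N := by obtain ⟨m, hm⟩ := hN; omega
    have h2 : ∀ k : Fin N, k + 1 + 1 ≠ k := by
      intro k h
      have h0 : (1 + 1 : Fin N) = 0 := by
        have : k + (1 + 1) = k + 0 := by rw [← add_assoc, add_zero]; exact h
        exact add_left_cancel this
      have hv := congrArg Fin.val h0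
      rw [Fin.val_add, Fin.val_one', Fin.val_zero] at hv
      rw [Nat.mod_eq_of_lt (show 1 < N by omega)] at hv
      rw [Nat.mod_eq_of_lt (show 1 + 1 < N by omega)] at hv
      omega
    have hdvd : (2:ℕ) ∣ N := by obtain ⟨m, hm⟩ := hN; exact ⟨m, by omega⟩
    have hsign : ∀ k : Fin N, (-1:ℂ)^(((k+1) : Fin N) : ℕ) = -(-1:ℂ)^(k:ℕ) := by
      intro k
      have hval : (((k+1) : Fin N) : ℕ) % 2 = ((k:ℕ) + 1) % 2 := by
        rw [Fin.val_add, Fin.val_one', Nat.mod_mod_of_dvd _ hdvd,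
          Nat.mod_eq_of_lt (show 1 < N by omega)]
      rw [neg_one_pow_eq_pow_mod_two, hval, ← neg_one_pow_eq_pow_mod_two, pow_succ]
      ring
    set a : ℂ := (hX:ℂ)^2 + (hY:ℂ)^2 with ha
    have hAA : A * A = a • (1 : Matrix (Fin 2) (Fin 2) ℂ) := by
      rw [hA, ha]
      ext i j
      fin_cases i <;> fin_cases j <;>
        simp [σx, σy, Matrix.mul_apply, Fin.sum_univ_two, Matrix.one_apply] <;>
        ring_nf <;>
        simp [Complex.I_sq] <;> try ring
    set c : ℂ := (hX:ℂ)^2 with hc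
    have hx : (hX:ℂ) ≠ 0 := Complex.ofReal_ne_zero.mpr hhX
    have hcne : c ≠ 0 := pow_ne_zero 2 hx
    have hH' : c • H = ∑ j : Fin N,
        ((JX/2 : ℂ) • opT N A B j + (JX/2 : ℂ) • opT' N A B j + c • pauliAt N j A) := by
      rw [hH, Finset.smul_sum]
      refine Finset.sum_congr rfl (fun i _ => ?_)
      simp only [opT, opT', hexpA, hexpB]
      simp only [add_mul, sub_mul, mul_add, mul_sub, smul_mul_assoc, mul_smul_comm,
        smul_add, smul_sub, smul_smul]
      match_scalars <;> (try ring1) <;> (field_simp; try (left; ring)) <;> (rw [hc]; ring)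
    have htot : ∑ i : Fin N, ((-1:ℂ)^(i:ℕ) * (JX/2 : ℂ)) •
        (opZ N A B a i + opZ N A B a (i+1) + opV N A B (i-1) + opV N A B i) = 0 := by
      have ht := total_sum hsign (fun k => opZ N A B a k) (fun k => opV N A B k)
      calc ∑ i : Fin N, ((-1:ℂ)^(i:ℕ) * (JX/2 : ℂ)) •
            (opZ N A B a i + opZ N A B a (i+1) + opV N A B (i-1) + opV N A B i)
          = (JX/2 : ℂ) • ∑ i : Fin N, (-1:ℂ)^(i:ℕ) •
            (opZ N A B a i + opZ N A B a (i+1) + opV N A B (i-1) + opV N A B i) := by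
            rw [Finset.smul_sum]
            exact Finset.sum_congr rfl (fun i _ => by rw [smul_smul, mul_comm])
        _ = 0 := by rw [ht, smul_zero]
    have key : Q * (c • H) = (c • H) * Q := by
      rw [hQ', hH']
      exact key_abstract (fun i : Fin N => (-1:ℂ)^(i:ℕ)) (JX/2 : ℂ) c (opU N A)
        (opT N A B) (opT' N A B) (fun j => pauliAt N j A)
        (fun i => opZ N A B a i + opZ N A B a (i+1) + opV N A B (i-1) + opV N A B i)
        (field_comm A h1) (innerSumComm A B a hAA h1 h2) htot
    rw [mul_smul_comm, smul_mul_assoc] at key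
    exact smul_right_injective _ hcne key
end

section
/- For the rank-2 Hamiltonian H = Σᵢ (J_X XᵢXᵢ₊₁ + J_Y YᵢYᵢ₊₁ + h_X Xᵢ + h_Y Yᵢ + h_Z Zᵢ) with J_X, J_Y ≠ 0 and (h_X, h_Y) ≠ (0,0), any 1-support conserved quantity Q = Σᵢ (aᵢ Xᵢ + bᵢ Yᵢ + cᵢ Zᵢ) (with site-dependent real coefficients) commuting with H must be zero. -/
open Complex
open scoped Classical

lemma fin2cases (x : Fin 2) : x = 0 ∨ x = 1 := by fin_cases x <;> simp

@[simp] lemma sx00 : σx 0 0 = 0 := by simp [σx]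
@[simp] lemma sx01 : σx 0 1 = 1 := by simp [σx]
@[simp] lemma sx10 : σx 1 0 = 1 := by simp [σx]
@[simp] lemma sx11 : σx 1 1 = 0 := by simp [σx]
@[simp] lemma sy00 : σy 0 0 = 0 := by simp [σy]
@[simp] lemma sy01 : σy 0 1 = -I := by simp [σy]
@[simp] lemma sy10 : σy 1 0 = I := by simp [σy]
@[simp] lemma sy11 : σy 1 1 = 0 := by simp [σy]
@[simp] lemma sz00 : σz 0 0 = 1 := by simp [σz]
@[simp] lemma sz01 : σz 0 1 = 0 := by simp [σz]
@[simp] lemma sz10 : σz 1 0 = 0 := by simp [σz]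
@[simp] lemma sz11 : σz 1 1 = -1 := by simp [σz]

@[simp] lemma sx_diag (u : Fin 2) : σx u u = 0 := by rcases fin2cases u with h|h <;> simp [h]
@[simp] lemma sy_diag (u : Fin 2) : σy u u = 0 := by rcases fin2cases u with h|h <;> simp [h]
@[simp] lemma sx_flip (u : Fin 2) : σx u (1-u) = 1 := by rcases fin2cases u with h|h <;> simp [h]
@[simp] lemma sx_flip' (u : Fin 2) : σx (1-u) u = 1 := by rcases fin2cases u with h|h <;> simp [h]
@[simp] lemma sz_flip (u : Fin 2) : σz u (1-u) = 0 := by rcases fin2cases u with h|h <;> simp [h]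
@[simp] lemma sz_flip' (u : Fin 2) : σz (1-u) u = 0 := by rcases fin2cases u with h|h <;> simp [h]
lemma flip_ne (u : Fin 2) : 1 - u ≠ u := by rcases fin2cases u with h|h <;> simp [h]

lemma sz_off {u w : Fin 2} (h : u ≠ w) : σz u w = 0 := by
  rcases fin2cases u with h1|h1 <;> rcases fin2cases w with h2|h2 <;> subst h1 <;> subst h2 <;>
    first | exact absurd rfl h | simp

lemma sum_fin2_split (u : Fin 2) (F : Fin 2 → ℂ) : ∑ w, F w = F u + F (1 - u) := by
  rcases fin2cases u with h|h <;> subst h <;> rw [Fin.sum_univ_two] <;> norm_num <;> ring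

lemma fin_one_ne (N : ℕ) [NeZero N] (hN : 2 ≤ N) : ∀ x : Fin N, x + 1 ≠ x := by
  intro x h
  have h1 : (1 : Fin N).val = 1 := by rw [Fin.val_one']; exact Nat.mod_eq_of_lt (by omega)
  have h' : (x.val + 1) % N = x.val := by
    have := congrArg Fin.val h
    rwa [Fin.val_add, h1] at this
  rcases Nat.lt_or_ge (x.val + 1) N with hlt | hge
  · rw [Nat.mod_eq_of_lt hlt] at h'; omega
  · have hx := x.isLt
    have he : x.val + 1 = N := by omega
    rw [he, Nat.mod_self] at h'
    omega

lemma fin_two_ne (N : ℕ) [NeZero N] (hN : 3 ≤ N) : ∀ x : Fin N, x + 1 + 1 ≠ x := by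
  intro x h
  have h1 : (1 : Fin N).val = 1 := by rw [Fin.val_one']; exact Nat.mod_eq_of_lt (by omega)
  have h' : ((x.val + 1) % N + 1) % N = x.val := by
    have := congrArg Fin.val h
    rwa [Fin.val_add, Fin.val_add, h1] at this
  have hx := x.isLt
  rcases Nat.lt_or_ge (x.val + 1) N with hlt | hge
  · rw [Nat.mod_eq_of_lt hlt] at h'
    rcases Nat.lt_or_ge (x.val + 1 + 1) N with hlt2 | hge2
    · rw [Nat.mod_eq_of_lt hlt2] at h'; omega
    · have he : x.val + 1 + 1 = N := by omega
      rw [he, Nat.mod_self] at h'; omega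
  · have he : x.val + 1 = N := by omega
    rw [he, Nat.mod_self] at h'
    simp at h'
    rw [Nat.mod_eq_of_lt (by omega)] at h'
    omega

lemma update_inj {N : ℕ} (f : Fin N → Fin 2) (i : Fin N) :
    Function.Injective (Function.update f i) := fun w w' h => by
  have := congrFun h i; simpa using this

lemma mulPauli_apply {N : ℕ} (i : Fin N) (M : Matrix (Fin 2) (Fin 2) ℂ)
    (T : Matrix (Fin N → Fin 2) (Fin N → Fin 2) ℂ) (f g : Fin N → Fin 2) :
    (pauliAt N i M * T) f g = ∑ w : Fin 2, M (f i) w * T (Function.update f i w) g := by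
  rw [Matrix.mul_apply]
  have h1 : ∑ h : Fin N → Fin 2, pauliAt N i M f h * T h g
      = ∑ h ∈ Finset.univ.image (Function.update f i), pauliAt N i M f h * T h g := by
    symm
    apply Finset.sum_subset (Finset.subset_univ _)
    intro h _ hh
    have hne : ¬ (∀ j, j ≠ i → f j = h j) := by
      intro hall
      apply hh
      refine Finset.mem_image.mpr ⟨h i, Finset.mem_univ _, ?_⟩
      funext j
      by_cases hj : j = i
      · subst hj; simp
      · rw [Function.update_of_ne hj]; exact hall j hj
    simp [pauliAt, hne]
  rw [h1, Finset.sum_image (fun w _ w' _ h => update_inj f i h)]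
  refine Finset.sum_congr rfl fun w _ => ?_
  have hc : ∀ j, j ≠ i → f j = Function.update f i w j := fun j hj =>
    (Function.update_of_ne hj _ _).symm
  show M (f i) (Function.update f i w i) * _ * T _ g = _
  rw [Function.update_self, if_pos hc, mul_one]

lemma pauliMul_apply {N : ℕ} (i : Fin N) (M : Matrix (Fin 2) (Fin 2) ℂ)
    (T : Matrix (Fin N → Fin 2) (Fin N → Fin 2) ℂ) (f g : Fin N → Fin 2) :
    (T * pauliAt N i M) f g = ∑ w : Fin 2, T f (Function.update g i w) * M w (g i) := by
  rw [Matrix.mul_apply]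
  have h1 : ∑ h : Fin N → Fin 2, T f h * pauliAt N i M h g
      = ∑ h ∈ Finset.univ.image (Function.update g i), T f h * pauliAt N i M h g := by
    symm
    apply Finset.sum_subset (Finset.subset_univ _)
    intro h _ hh
    have hne : ¬ (∀ j, j ≠ i → h j = g j) := by
      intro hall
      apply hh
      refine Finset.mem_image.mpr ⟨h i, Finset.mem_univ _, ?_⟩
      funext j
      by_cases hj : j = i
      · subst hj; simp
      · rw [Function.update_of_ne hj]; exact (hall j hj).symm
    simp [pauliAt, hne]
  rw [h1, Finset.sum_image (fun w _ w' _ h => update_inj g i h)]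
  refine Finset.sum_congr rfl fun w _ => ?_
  have hc : ∀ j, j ≠ i → Function.update g i w j = g j := fun j hj =>
    Function.update_of_ne hj _ _
  show T f _ * (M (Function.update g i w i) (g i) * _) = _
  rw [Function.update_self, if_pos hc, mul_one]

lemma pauli_pair_apply {N : ℕ} (i j : Fin N) (hij : i ≠ j) (A B : Matrix (Fin 2) (Fin 2) ℂ)
    (f g : Fin N → Fin 2) :
    (pauliAt N i A * pauliAt N j B) f g
      = A (f i) (g i) * B (f j) (g j) *
        (if ∀ k, k ≠ i → k ≠ j → f k = g k then 1 else 0) := by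
  rw [mulPauli_apply]
  have key : ∀ w, pauliAt N j B (Function.update f i w) g
      = B (f j) (g j) * ((if w = g i then 1 else 0) *
          (if ∀ k, k ≠ i → k ≠ j → f k = g k then 1 else 0)) := by
    intro w
    show B (Function.update f i w j) (g j) * _ = _
    rw [Function.update_of_ne (Ne.symm hij)]
    congr 1
    by_cases h1 : w = g i
    · by_cases h2 : ∀ k, k ≠ i → k ≠ j → f k = g k
      · have hall : ∀ k, k ≠ j → Function.update f i w k = g k := by
          intro k hk
          by_cases hki : k = i
          · subst hki; simp [h1]
          · rw [Function.update_of_ne hki]; exact h2 k hki hk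
        rw [if_pos hall, if_pos h1, if_pos h2]; norm_num
      · have hno : ¬ ∀ k, k ≠ j → Function.update f i w k = g k := by
          intro hall; apply h2; intro k hki hkj
          have := hall k hkj; rwa [Function.update_of_ne hki] at this
        rw [if_neg hno, if_pos h1, if_neg h2]; norm_num
    · have hno : ¬ ∀ k, k ≠ j → Function.update f i w k = g k := by
        intro hall
        apply h1
        have := hall i hij
        simpa using this
      rw [if_neg hno, if_neg h1]; norm_num
  simp only [key]
  rw [Fin.sum_univ_two]
  rcases fin2cases (g i) with h|h <;> rw [h] <;> simp <;> ring

noncomputable def HH (N : ℕ) [NeZero N] (JX JY hX hY hZ : ℝ) :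
    Matrix (Fin N → Fin 2) (Fin N → Fin 2) ℂ :=
  ∑ i : Fin N,
    ((JX : ℂ) • (pauliAt N i σx * pauliAt N (i + 1) σx)
      + (JY : ℂ) • (pauliAt N i σy * pauliAt N (i + 1) σy)
      + (hX : ℂ) • pauliAt N i σx + (hY : ℂ) • pauliAt N i σy
      + (hZ : ℂ) • pauliAt N i σz)

section HHlemmas
variable {N : ℕ} [NeZero N] {JX JY hX hY hZ : ℝ}

lemma HH_apply (hN : 3 ≤ N) (f g : Fin N → Fin 2) :
    HH N JX JY hX hY hZ f g = ∑ i : Fin N,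
      ((JX:ℂ) * (σx (f i) (g i) * σx (f (i+1)) (g (i+1))) *
          (if ∀ k, k ≠ i → k ≠ i+1 → f k = g k then 1 else 0)
        + (JY:ℂ) * (σy (f i) (g i) * σy (f (i+1)) (g (i+1))) *
          (if ∀ k, k ≠ i → k ≠ i+1 → f k = g k then 1 else 0)
        + (hX:ℂ) * σx (f i) (g i) * (if ∀ k, k ≠ i → f k = g k then 1 else 0)
        + (hY:ℂ) * σy (f i) (g i) * (if ∀ k, k ≠ i → f k = g k then 1 else 0)
        + (hZ:ℂ) * σz (f i) (g i) * (if ∀ k, k ≠ i → f k = g k then 1 else 0)) := by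
  rw [HH, Matrix.sum_apply]
  refine Finset.sum_congr rfl fun i _ => ?_
  have hne : i ≠ i + 1 := (fin_one_ne N (by omega) i).symm
  rw [Matrix.add_apply, Matrix.add_apply, Matrix.add_apply, Matrix.add_apply,
    Matrix.smul_apply, Matrix.smul_apply, Matrix.smul_apply, Matrix.smul_apply, Matrix.smul_apply,
    pauli_pair_apply i (i+1) hne, pauli_pair_apply i (i+1) hne]
  simp only [pauliAt, smul_eq_mul]
  ring

lemma HH0 (hN : 3 ≤ N) (f g : Fin N → Fin 2) (x y : Fin N) (hxy : x ≠ y) (hxy1 : x ≠ y + 1) (hyx1 : y ≠ x + 1)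
    (hfx : f x ≠ g x) (hfy : f y ≠ g y) : HH N JX JY hX hY hZ f g = 0 := by
  rw [HH_apply hN]
  apply Finset.sum_eq_zero
  intro i _
  have c1 : ¬ (∀ k, k ≠ i → f k = g k) := by
    intro hall
    by_cases hx : x = i
    · exact hfy (hall y (fun h => hxy (by rw [hx, h])))
    · exact hfx (hall x hx)
  have c2 : ¬ (∀ k, k ≠ i → k ≠ i + 1 → f k = g k) := by
    intro hall
    by_cases hx : x = i
    · subst hx
      exact hfy (hall y (Ne.symm hxy) hyx1)
    · by_cases hx1 : x = i + 1
      · have hyi : y ≠ i := fun h => hxy1 (by rw [h, hx1])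
        have hy2 : y ≠ i + 1 := by rw [← hx1]; exact Ne.symm hxy
        exact hfy (hall y hyi hy2)
      · exact hfx (hall x hx hx1)
  simp [c1, c2]

lemma HH_diag (hN : 3 ≤ N) (f : Fin N → Fin 2) :
    HH N JX JY hX hY hZ f f = (hZ:ℂ) * ∑ j, σz (f j) (f j) := by
  rw [HH_apply hN, Finset.mul_sum]
  refine Finset.sum_congr rfl fun i _ => ?_
  simp

lemma HH1 (hN : 3 ≤ N) (f g : Fin N → Fin 2) (q : Fin N) (hd : ∀ j, j ≠ q → f j = g j) (hq : f q ≠ g q) :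
    HH N JX JY hX hY hZ f g = (hX:ℂ) * σx (f q) (g q) + (hY:ℂ) * σy (f q) (g q) := by
  rw [HH_apply hN]
  have hne1 : q + 1 ≠ q := fin_one_ne N (by omega) q
  have h0 : ∀ i ∈ Finset.univ, i ≠ q →
      ((JX:ℂ) * (σx (f i) (g i) * σx (f (i+1)) (g (i+1))) *
          (if ∀ k, k ≠ i → k ≠ i+1 → f k = g k then 1 else 0)
        + (JY:ℂ) * (σy (f i) (g i) * σy (f (i+1)) (g (i+1))) *
          (if ∀ k, k ≠ i → k ≠ i+1 → f k = g k then 1 else 0)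
        + (hX:ℂ) * σx (f i) (g i) * (if ∀ k, k ≠ i → f k = g k then 1 else 0)
        + (hY:ℂ) * σy (f i) (g i) * (if ∀ k, k ≠ i → f k = g k then 1 else 0)
        + (hZ:ℂ) * σz (f i) (g i) * (if ∀ k, k ≠ i → f k = g k then 1 else 0)) = 0 := by
    intro i _ hiq
    have c1 : ¬ (∀ k, k ≠ i → f k = g k) := fun hall => hq (hall q (Ne.symm hiq))
    by_cases hi1 : i + 1 = q
    · have hfi : f i = g i := hd i hiq
      rw [hfi]
      simp [c1]
    · have c2 : ¬ (∀ k, k ≠ i → k ≠ i+1 → f k = g k) :=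
        fun hall => hq (hall q (Ne.symm hiq) (fun h => hi1 h.symm))
      simp [c1, c2]
  rw [Finset.sum_eq_single_of_mem q (Finset.mem_univ q) h0]
  have e2 : f (q+1) = g (q+1) := hd _ hne1
  have hzoff : σz (f q) (g q) = 0 := sz_off hq
  rw [if_pos hd, e2, hzoff]
  simp

lemma HH3 (hN : 3 ≤ N) (f g : Fin N → Fin 2) (q : Fin N) (hd : ∀ j, j ≠ q → j ≠ q + 1 → f j = g j)
    (ha : f q ≠ g q) (hb : f (q+1) ≠ g (q+1)) :
    HH N JX JY hX hY hZ f g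
      = (JX:ℂ) * (σx (f q) (g q) * σx (f (q+1)) (g (q+1)))
        + (JY:ℂ) * (σy (f q) (g q) * σy (f (q+1)) (g (q+1))) := by
  rw [HH_apply hN]
  have hne1 : q + 1 ≠ q := fin_one_ne N (by omega) q
  have h0 : ∀ i ∈ Finset.univ, i ≠ q →
      ((JX:ℂ) * (σx (f i) (g i) * σx (f (i+1)) (g (i+1))) *
          (if ∀ k, k ≠ i → k ≠ i+1 → f k = g k then 1 else 0)
        + (JY:ℂ) * (σy (f i) (g i) * σy (f (i+1)) (g (i+1))) *
          (if ∀ k, k ≠ i → k ≠ i+1 → f k = g k then 1 else 0)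
        + (hX:ℂ) * σx (f i) (g i) * (if ∀ k, k ≠ i → f k = g k then 1 else 0)
        + (hY:ℂ) * σy (f i) (g i) * (if ∀ k, k ≠ i → f k = g k then 1 else 0)
        + (hZ:ℂ) * σz (f i) (g i) * (if ∀ k, k ≠ i → f k = g k then 1 else 0)) = 0 := by
    intro i _ hiq
    have c1 : ¬ (∀ k, k ≠ i → f k = g k) := fun hall => ha (hall q (Ne.symm hiq))
    have c2 : ¬ (∀ k, k ≠ i → k ≠ i+1 → f k = g k) := by
      intro hall
      by_cases hq1 : q = i + 1
      · have w1 : q + 1 ≠ i := by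
          intro h
          exact fin_two_ne N hN i (by rw [← hq1, h])
        have w2 : q + 1 ≠ i + 1 := by rw [← hq1]; exact hne1
        exact hb (hall (q+1) w1 w2)
      · exact ha (hall q (Ne.symm hiq) hq1)
    simp [c1, c2]
  rw [Finset.sum_eq_single_of_mem q (Finset.mem_univ q) h0]
  have c1 : ¬ (∀ k, k ≠ q → f k = g k) := fun hall => hb (hall (q+1) hne1)
  rw [if_pos hd, if_neg c1, sz_off ha]
  ring

end HHlemmas

lemma ri_zero (x y : ℝ) (h : (x:ℂ) + (y:ℂ)*I = 0) : x = 0 ∧ y = 0 := by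
  have hre := congrArg Complex.re h
  have him := congrArg Complex.im h
  simp at hre him
  exact ⟨hre, him⟩

theorem rank2_no_one_support_conserved
    (N : ℕ) [NeZero N] (hN : 3 ≤ N) (JX JY hX hY hZ : ℝ)
    (hJX : JX ≠ 0) (hJY : JY ≠ 0) (hfield : (hX, hY) ≠ (0, 0))
    (a b c : Fin N → ℝ)
    (H : Matrix (Fin N → Fin 2) (Fin N → Fin 2) ℂ)
    (hH : H = ∑ i : Fin N,
      ((JX : ℂ) • (pauliAt N i σx * pauliAt N (i + 1) σx)
        + (JY : ℂ) • (pauliAt N i σy * pauliAt N (i + 1) σy)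
        + (hX : ℂ) • pauliAt N i σx + (hY : ℂ) • pauliAt N i σy
        + (hZ : ℂ) • pauliAt N i σz))
    (Q : Matrix (Fin N → Fin 2) (Fin N → Fin 2) ℂ)
    (hQ : Q = ∑ i : Fin N,
      ((a i : ℂ) • pauliAt N i σx + (b i : ℂ) • pauliAt N i σy
        + (c i : ℂ) • pauliAt N i σz))
    (hcomm : Q * H = H * Q) :
    ∀ i : Fin N, a i = 0 ∧ b i = 0 ∧ c i = 0 := by
  have hone : ∀ x : Fin N, x + 1 ≠ x := fin_one_ne N (by omega)
  have htwo : ∀ x : Fin N, x + 1 + 1 ≠ x := fin_two_ne N hN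
  have hHeq : H = HH N JX JY hX hY hZ := by rw [hH]; rfl
  rw [hHeq] at hcomm

  have master : ∀ (q : Fin N) (u v : Fin 2),
      (2:ℂ)*(c q:ℂ)*((hX:ℂ) - I*(hY:ℂ)) - 2*(hZ:ℂ)*((a q:ℂ) - I*(b q:ℂ))
      + (((a (q-1):ℂ) + (b (q-1):ℂ) * σy u (1-u)) * ((JX:ℂ) - I*(JY:ℂ)* σy (1-u) u)
         - ((a (q-1):ℂ) + (b (q-1):ℂ) * σy (1-u) u) * ((JX:ℂ) - I*(JY:ℂ)* σy u (1-u)))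
      + (((a (q+1):ℂ) + (b (q+1):ℂ) * σy v (1-v)) * ((JX:ℂ) - I*(JY:ℂ)* σy (1-v) v)
         - ((a (q+1):ℂ) + (b (q+1):ℂ) * σy (1-v) v) * ((JX:ℂ) - I*(JY:ℂ)* σy v (1-v))) = 0 := by
    intro q u v
    have hqp : q + 1 ≠ q := hone q
    have hm1 : q - 1 + 1 = q := sub_add_cancel q 1
    have hqm : q - 1 ≠ q := by
      intro h
      exact hone (q-1) (by rw [hm1, h])
    have hmp : q - 1 ≠ q + 1 := by
      intro h
      have h2 := congrArg (fun z => z + 1) h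
      rw [hm1] at h2
      exact htwo q h2.symm
    set f : Fin N → Fin 2 := fun j => if j = q - 1 then u else if j = q + 1 then v else 0 with hfdef
    set g : Fin N → Fin 2 := Function.update f q 1 with hgdef
    have hfq : f q = 0 := by
      show (if q = q - 1 then u else if q = q + 1 then v else 0) = 0
      rw [if_neg (Ne.symm hqm), if_neg (Ne.symm hqp)]
    have hfm : f (q-1) = u := by
      show (if q - 1 = q - 1 then u else if q - 1 = q + 1 then v else 0) = u
      rw [if_pos rfl]
    have hfp : f (q+1) = v := by
      show (if q + 1 = q - 1 then u else if q + 1 = q + 1 then v else 0) = v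
      rw [if_neg (Ne.symm hmp), if_pos rfl]
    have hgq : g q = 1 := Function.update_self q 1 f
    have hgoff : ∀ j, j ≠ q → g j = f j := fun j hj => Function.update_of_ne hj _ _
    have hgm : g (q-1) = u := by rw [hgoff _ hqm, hfm]
    have hgp : g (q+1) = v := by rw [hgoff _ hqp, hfp]
    have hfgq : f q ≠ g q := by rw [hfq, hgq]; exact (by decide)
    -- update collapsing lemmas
    have u1 : Function.update f (q-1) u = f := by rw [← hfm]; exact Function.update_eq_self _ _
    have u2a : Function.update f q 0 = f := by rw [← hfq]; exact Function.update_eq_self _ _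
    have u2b : Function.update f q 1 = g := rfl
    have u3a : Function.update g q 1 = g := by rw [← hgq]; exact Function.update_eq_self _ _
    have u3b : Function.update g q 0 = f := by
      show Function.update (Function.update f q 1) q 0 = f
      rw [Function.update_idem, ← hfq]
      exact Function.update_eq_self _ _
    have u4 : Function.update g (q-1) u = g := by rw [← hgm]; exact Function.update_eq_self _ _
    have u5 : Function.update f (q+1) v = f := by rw [← hfp]; exact Function.update_eq_self _ _
    have u6 : Function.update g (q+1) v = g := by rw [← hgp]; exact Function.update_eq_self _ _
    -- entry values of HH
    have e1 : HH N JX JY hX hY hZ f g = (hX:ℂ) + (hY:ℂ) * (-I) := by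
      have hd : ∀ j, j ≠ q → f j = g j := fun j hj => (hgoff j hj).symm
      rw [HH1 hN f g q hd hfgq, hfq, hgq, sx01, sy01]
      ring
    have e3 : HH N JX JY hX hY hZ f f = (hZ:ℂ) * (∑ j, σz (f j) (f j)) := HH_diag hN f
    have e2' : HH N JX JY hX hY hZ g g = (hZ:ℂ) * ((∑ j, σz (f j) (f j)) - 2) := by
      rw [HH_diag hN g]
      congr 1
      have h1 : ∀ s : Fin N → Fin 2, ∑ j, σz (s j) (s j)
          = ∑ j ∈ Finset.univ.erase q, σz (s j) (s j) + σz (s q) (s q) :=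
        fun s => (Finset.sum_erase_add _ _ (Finset.mem_univ q)).symm
      rw [h1 g, h1 f]
      have h2 : ∑ j ∈ Finset.univ.erase q, σz (g j) (g j)
          = ∑ j ∈ Finset.univ.erase q, σz (f j) (f j) :=
        Finset.sum_congr rfl (fun j hj => by rw [hgoff j (Finset.mem_erase.mp hj).1])
      rw [h2, hgq, hfq, sz11, sz00]
      ring
    have e4 : HH N JX JY hX hY hZ (Function.update f (q-1) (1-u)) g = (JX:ℂ) + (JY:ℂ) * σy (1-u) u * (-I) := by
      have hd : ∀ j, j ≠ q-1 → j ≠ (q-1) + 1 → Function.update f (q-1) (1-u) j = g j := by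
        intro j hj1 hj2
        rw [hm1] at hj2
        rw [Function.update_of_ne hj1]
        exact (hgoff j hj2).symm
      have ha : Function.update f (q-1) (1-u) (q-1) ≠ g (q-1) := by
        rw [Function.update_self, hgm]; exact flip_ne u
      have hb : Function.update f (q-1) (1-u) ((q-1)+1) ≠ g ((q-1)+1) := by
        rw [hm1, Function.update_of_ne (Ne.symm hqm), hfq, hgq]; exact (by decide)
      rw [HH3 hN _ g (q-1) hd ha hb, hm1, Function.update_self,
        Function.update_of_ne (Ne.symm hqm), hfq, hgq, hgm, sx_flip', sx01, sy01]
      ring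
    have e5 : HH N JX JY hX hY hZ (Function.update f (q+1) (1-v)) g = (JX:ℂ) + (JY:ℂ) * σy (1-v) v * (-I) := by
      have hd : ∀ j, j ≠ q → j ≠ q + 1 → Function.update f (q+1) (1-v) j = g j := by
        intro j hj1 hj2
        rw [Function.update_of_ne hj2]
        exact (hgoff j hj1).symm
      have ha : Function.update f (q+1) (1-v) q ≠ g q := by
        rw [Function.update_of_ne (Ne.symm hqp), hfq, hgq]; exact (by decide)
      have hb : Function.update f (q+1) (1-v) (q+1) ≠ g (q+1) := by
        rw [Function.update_self, hgp]; exact flip_ne v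
      rw [HH3 hN _ g q hd ha hb, Function.update_self,
        Function.update_of_ne (Ne.symm hqp), hfq, hgq, hgp, sx_flip', sx01, sy01]
      ring
    have e6 : HH N JX JY hX hY hZ f (Function.update g (q-1) (1-u)) = (JX:ℂ) + (JY:ℂ) * σy u (1-u) * (-I) := by
      have hd : ∀ j, j ≠ q-1 → j ≠ (q-1) + 1 → f j = Function.update g (q-1) (1-u) j := by
        intro j hj1 hj2
        rw [hm1] at hj2
        rw [Function.update_of_ne hj1]
        exact (hgoff j hj2).symm
      have ha : f (q-1) ≠ Function.update g (q-1) (1-u) (q-1) := by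
        rw [Function.update_self, hfm]; exact (flip_ne u).symm
      have hb : f ((q-1)+1) ≠ Function.update g (q-1) (1-u) ((q-1)+1) := by
        rw [hm1, Function.update_of_ne (Ne.symm hqm), hfq, hgq]; exact (by decide)
      rw [HH3 hN f _ (q-1) hd ha hb, hm1, Function.update_self,
        Function.update_of_ne (Ne.symm hqm), hfq, hgq, hfm, sx_flip, sx01, sy01]
      ring
    have e7 : HH N JX JY hX hY hZ f (Function.update g (q+1) (1-v)) = (JX:ℂ) + (JY:ℂ) * σy v (1-v) * (-I) := by
      have hd : ∀ j, j ≠ q → j ≠ q + 1 → f j = Function.update g (q+1) (1-v) j := by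
        intro j hj1 hj2
        rw [Function.update_of_ne hj2]
        exact (hgoff j hj1).symm
      have ha : f q ≠ Function.update g (q+1) (1-v) q := by
        rw [Function.update_of_ne (Ne.symm hqp), hfq, hgq]; exact (by decide)
      have hb : f (q+1) ≠ Function.update g (q+1) (1-v) (q+1) := by
        rw [Function.update_self, hfp]; exact (flip_ne v).symm
      rw [HH3 hN f _ q hd ha hb, Function.update_self,
        Function.update_of_ne (Ne.symm hqp), hfq, hgq, hfp, sx_flip, sx01, sy01]
      ring
    -- the sums over w
    have s1 : (∑ w, σx (f (q-1)) w * HH N JX JY hX hY hZ (Function.update f (q-1) w) g)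
        = (JX:ℂ) + (JY:ℂ) * σy (1-u) u * (-I) := by
      rw [hfm]
      simp only [sum_fin2_split u, u1, e4, sx_diag, sx_flip]
      ring
    have s2 : (∑ w, σy (f (q-1)) w * HH N JX JY hX hY hZ (Function.update f (q-1) w) g)
        = σy u (1-u) * ((JX:ℂ) + (JY:ℂ) * σy (1-u) u * (-I)) := by
      rw [hfm]
      simp only [sum_fin2_split u, u1, e4, sy_diag]
      ring
    have s3 : (∑ w, σz (f (q-1)) w * HH N JX JY hX hY hZ (Function.update f (q-1) w) g)
        = σz u u * ((hX:ℂ) + (hY:ℂ) * (-I)) := by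
      rw [hfm]
      simp only [sum_fin2_split u, u1, e1, sz_flip]
      ring
    have r1 : (∑ w, HH N JX JY hX hY hZ f (Function.update g (q-1) w) * σx w (g (q-1)))
        = (JX:ℂ) + (JY:ℂ) * σy u (1-u) * (-I) := by
      rw [hgm]
      simp only [sum_fin2_split u, u4, e6, sx_diag, sx_flip']
      ring
    have r2 : (∑ w, HH N JX JY hX hY hZ f (Function.update g (q-1) w) * σy w (g (q-1)))
        = ((JX:ℂ) + (JY:ℂ) * σy u (1-u) * (-I)) * σy (1-u) u := by
      rw [hgm]
      simp only [sum_fin2_split u, u4, e6, sy_diag]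
      ring
    have r3 : (∑ w, HH N JX JY hX hY hZ f (Function.update g (q-1) w) * σz w (g (q-1)))
        = ((hX:ℂ) + (hY:ℂ) * (-I)) * σz u u := by
      rw [hgm]
      simp only [sum_fin2_split u, u4, e1, sz_flip']
      ring
    have s4 : (∑ w, σx (f q) w * HH N JX JY hX hY hZ (Function.update f q w) g)
        = (hZ:ℂ) * ((∑ j, σz (f j) (f j)) - 2) := by
      rw [hfq]
      simp only [sum_fin2_split 0, sub_zero, u2a, u2b, e2', sx00, sx01]
      ring
    have s5 : (∑ w, σy (f q) w * HH N JX JY hX hY hZ (Function.update f q w) g)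
        = (-I) * ((hZ:ℂ) * ((∑ j, σz (f j) (f j)) - 2)) := by
      rw [hfq]
      simp only [sum_fin2_split 0, sub_zero, u2a, u2b, e2', sy00, sy01]
      ring
    have s6 : (∑ w, σz (f q) w * HH N JX JY hX hY hZ (Function.update f q w) g)
        = (hX:ℂ) + (hY:ℂ) * (-I) := by
      rw [hfq]
      simp only [sum_fin2_split 0, sub_zero, u2a, u2b, e1, sz00, sz01]
      ring
    have r4 : (∑ w, HH N JX JY hX hY hZ f (Function.update g q w) * σx w (g q))
        = (hZ:ℂ) * (∑ j, σz (f j) (f j)) := by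
      rw [hgq]
      simp only [sum_fin2_split 1, sub_self, u3a, u3b, e3, sx11, sx01]
      ring
    have r5 : (∑ w, HH N JX JY hX hY hZ f (Function.update g q w) * σy w (g q))
        = (hZ:ℂ) * (∑ j, σz (f j) (f j)) * (-I) := by
      rw [hgq]
      simp only [sum_fin2_split 1, sub_self, u3a, u3b, e3, sy11, sy01]
      ring
    have r6 : (∑ w, HH N JX JY hX hY hZ f (Function.update g q w) * σz w (g q))
        = ((hX:ℂ) + (hY:ℂ) * (-I)) * (-1) := by
      rw [hgq]
      simp only [sum_fin2_split 1, sub_self, u3a, u3b, e1, sz11, sz01]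
      ring
    have s7 : (∑ w, σx (f (q+1)) w * HH N JX JY hX hY hZ (Function.update f (q+1) w) g)
        = (JX:ℂ) + (JY:ℂ) * σy (1-v) v * (-I) := by
      rw [hfp]
      simp only [sum_fin2_split v, u5, e5, sx_diag, sx_flip]
      ring
    have s8 : (∑ w, σy (f (q+1)) w * HH N JX JY hX hY hZ (Function.update f (q+1) w) g)
        = σy v (1-v) * ((JX:ℂ) + (JY:ℂ) * σy (1-v) v * (-I)) := by
      rw [hfp]
      simp only [sum_fin2_split v, u5, e5, sy_diag]
      ring
    have s9 : (∑ w, σz (f (q+1)) w * HH N JX JY hX hY hZ (Function.update f (q+1) w) g)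
        = σz v v * ((hX:ℂ) + (hY:ℂ) * (-I)) := by
      rw [hfp]
      simp only [sum_fin2_split v, u5, e1, sz_flip]
      ring
    have r7 : (∑ w, HH N JX JY hX hY hZ f (Function.update g (q+1) w) * σx w (g (q+1)))
        = (JX:ℂ) + (JY:ℂ) * σy v (1-v) * (-I) := by
      rw [hgp]
      simp only [sum_fin2_split v, u6, e7, sx_diag, sx_flip']
      ring
    have r8 : (∑ w, HH N JX JY hX hY hZ f (Function.update g (q+1) w) * σy w (g (q+1)))
        = ((JX:ℂ) + (JY:ℂ) * σy v (1-v) * (-I)) * σy (1-v) v := by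
      rw [hgp]
      simp only [sum_fin2_split v, u6, e7, sy_diag]
      ring
    have r9 : (∑ w, HH N JX JY hX hY hZ f (Function.update g (q+1) w) * σz w (g (q+1)))
        = ((hX:ℂ) + (hY:ℂ) * (-I)) * σz v v := by
      rw [hgp]
      simp only [sum_fin2_split v, u6, e1, sz_flip']
      ring
    -- the commutator entry equation
    have hE : (Q * HH N JX JY hX hY hZ) f g = (HH N JX JY hX hY hZ * Q) f g := by rw [hcomm]
    have hL : (Q * HH N JX JY hX hY hZ) f g = ∑ i : Fin N, ((a (i) : ℂ) * (∑ w, σx (f (i)) w * HH N JX JY hX hY hZ (Function.update f (i) w) g) + (b (i) : ℂ) * (∑ w, σy (f (i)) w * HH N JX JY hX hY hZ (Function.update f (i) w) g) + (c (i) : ℂ) * (∑ w, σz (f (i)) w * HH N JX JY hX hY hZ (Function.update f (i) w) g)) := by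
      rw [hQ, Matrix.sum_mul, Matrix.sum_apply]
      refine Finset.sum_congr rfl fun i _ => ?_
      simp only [Matrix.add_mul, Matrix.smul_mul, Matrix.add_apply, Matrix.smul_apply,
        smul_eq_mul, mulPauli_apply]
    have hR : (HH N JX JY hX hY hZ * Q) f g = ∑ i : Fin N, ((a (i) : ℂ) * (∑ w, HH N JX JY hX hY hZ f (Function.update g (i) w) * σx w (g (i))) + (b (i) : ℂ) * (∑ w, HH N JX JY hX hY hZ f (Function.update g (i) w) * σy w (g (i))) + (c (i) : ℂ) * (∑ w, HH N JX JY hX hY hZ f (Function.update g (i) w) * σz w (g (i)))) := by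
      rw [hQ, Matrix.mul_sum, Matrix.sum_apply]
      refine Finset.sum_congr rfl fun i _ => ?_
      simp only [Matrix.mul_add, Matrix.mul_smul, Matrix.add_apply, Matrix.smul_apply,
        smul_eq_mul, pauliMul_apply]
    have hkey : ∑ i : Fin N, (((a (i) : ℂ) * (∑ w, σx (f (i)) w * HH N JX JY hX hY hZ (Function.update f (i) w) g) + (b (i) : ℂ) * (∑ w, σy (f (i)) w * HH N JX JY hX hY hZ (Function.update f (i) w) g) + (c (i) : ℂ) * (∑ w, σz (f (i)) w * HH N JX JY hX hY hZ (Function.update f (i) w) g)) - ((a (i) : ℂ) * (∑ w, HH N JX JY hX hY hZ f (Function.update g (i) w) * σx w (g (i))) + (b (i) : ℂ) * (∑ w, HH N JX JY hX hY hZ f (Function.update g (i) w) * σy w (g (i))) + (c (i) : ℂ) * (∑ w, HH N JX JY hX hY hZ f (Function.update g (i) w) * σz w (g (i))))) = 0 := by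
      rw [Finset.sum_sub_distrib, ← hL, ← hR, sub_eq_zero]
      exact hE
    have hfar : ∀ i ∈ (Finset.univ : Finset (Fin N)),
        i ∉ ({q-1, q, q+1} : Finset (Fin N)) → (((a (i) : ℂ) * (∑ w, σx (f (i)) w * HH N JX JY hX hY hZ (Function.update f (i) w) g) + (b (i) : ℂ) * (∑ w, σy (f (i)) w * HH N JX JY hX hY hZ (Function.update f (i) w) g) + (c (i) : ℂ) * (∑ w, σz (f (i)) w * HH N JX JY hX hY hZ (Function.update f (i) w) g)) - ((a (i) : ℂ) * (∑ w, HH N JX JY hX hY hZ f (Function.update g (i) w) * σx w (g (i))) + (b (i) : ℂ) * (∑ w, HH N JX JY hX hY hZ f (Function.update g (i) w) * σy w (g (i))) + (c (i) : ℂ) * (∑ w, HH N JX JY hX hY hZ f (Function.update g (i) w) * σz w (g (i))))) = 0 := by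
      intro i _ hi
      simp only [Finset.mem_insert, Finset.mem_singleton] at hi
      push_neg at hi
      obtain ⟨h1, h2, h3⟩ := hi
      have hfg : g i = f i := hgoff i h2
      have hyx : q ≠ i + 1 := by
        intro h
        exact h1 (by rw [h, add_sub_cancel_right])
      have hz1 : HH N JX JY hX hY hZ (Function.update f i (1 - f i)) g = 0 := by
        apply HH0 hN _ _ i q h2 h3 hyx
        · rw [Function.update_self, hfg]; exact flip_ne (f i)
        · rw [Function.update_of_ne (Ne.symm h2), hfq, hgq]; exact (by decide)
      have hz2 : HH N JX JY hX hY hZ f (Function.update g i (1 - f i)) = 0 := by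
        apply HH0 hN _ _ i q h2 h3 hyx
        · rw [Function.update_self]; exact (flip_ne (f i)).symm
        · rw [Function.update_of_ne (Ne.symm h2), hfq, hgq]; exact (by decide)
      have e_ug : Function.update g i (f i) = g := by
        rw [← hfg]; exact Function.update_eq_self _ _
      rw [sub_eq_zero]
      simp only [sum_fin2_split (f i), Function.update_eq_self, e_ug, hz1, hz2, hfg,
        sx_diag, sy_diag, sz_flip, sz_flip']
      ring
    have hn1 : q ∉ ({q+1} : Finset (Fin N)) := by
      simp only [Finset.mem_singleton]
      exact Ne.symm hqp
    have hn2 : (q - 1) ∉ ({q, q+1} : Finset (Fin N)) := by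
      simp only [Finset.mem_insert, Finset.mem_singleton]
      push_neg
      exact ⟨hqm, hmp⟩
    have hkey2 : ∑ i ∈ ({q-1, q, q+1} : Finset (Fin N)), (((a (i) : ℂ) * (∑ w, σx (f (i)) w * HH N JX JY hX hY hZ (Function.update f (i) w) g) + (b (i) : ℂ) * (∑ w, σy (f (i)) w * HH N JX JY hX hY hZ (Function.update f (i) w) g) + (c (i) : ℂ) * (∑ w, σz (f (i)) w * HH N JX JY hX hY hZ (Function.update f (i) w) g)) - ((a (i) : ℂ) * (∑ w, HH N JX JY hX hY hZ f (Function.update g (i) w) * σx w (g (i))) + (b (i) : ℂ) * (∑ w, HH N JX JY hX hY hZ f (Function.update g (i) w) * σy w (g (i))) + (c (i) : ℂ) * (∑ w, HH N JX JY hX hY hZ f (Function.update g (i) w) * σz w (g (i))))) = 0 :=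
      (Finset.sum_subset (Finset.subset_univ _) hfar).trans hkey
    rw [Finset.sum_insert hn2, Finset.sum_insert hn1, Finset.sum_singleton] at hkey2
    rw [s1, s2, s3, r1, r2, r3, s4, s5, s6, r4, r5, r6, s7, s8, s9, r7, r8, r9] at hkey2
    linear_combination hkey2

  have z1 : (1:Fin 2) - 0 = 1 := by decide
  have z2 : (1:Fin 2) - 1 = 0 := by decide
  have hab : ∀ p : Fin N, a p = 0 ∧ b p = 0 := by
    intro p
    have h1 := master (p+1) 0 0
    have h2 := master (p+1) 1 0
    rw [add_sub_cancel_right, z1, sy01, sy10] at h1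
    rw [add_sub_cancel_right, z1, z2, sy01, sy10] at h2
    have hcomb : ((4*(JY * a p) : ℝ):ℂ) + ((-(4*(JX * b p)) : ℝ):ℂ) * I = 0 := by
      push_cast
      linear_combination h1 - h2 + 4*(JY:ℂ)*((a p : ℝ):ℂ)*Complex.I_sq
    obtain ⟨hx, hy⟩ := ri_zero _ _ hcomb
    constructor
    · rcases mul_eq_zero.mp hx with h | h
      · norm_num at h
      · rcases mul_eq_zero.mp h with h' | h'
        · exact absurd h' hJY
        · exact h'
    · have hy' : 4*(JX * b p) = 0 := by linarith
      rcases mul_eq_zero.mp hy' with h | h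
      · norm_num at h
      · rcases mul_eq_zero.mp h with h' | h'
        · exact absurd h' hJX
        · exact h'
  have hc : ∀ p : Fin N, c p = 0 := by
    intro p
    have h1 := master p 0 0
    rw [z1, sy01, sy10] at h1
    have cast0 : ∀ r : Fin N, (a r : ℂ) = 0 ∧ (b r : ℂ) = 0 := by
      intro r
      constructor
      · rw [(hab r).1]; exact Complex.ofReal_zero
      · rw [(hab r).2]; exact Complex.ofReal_zero
    rw [(cast0 p).1, (cast0 p).2, (cast0 (p-1)).1, (cast0 (p-1)).2,
      (cast0 (p+1)).1, (cast0 (p+1)).2] at h1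
    have hcomb : ((2*(c p * hX) : ℝ):ℂ) + ((-(2*(c p * hY)) : ℝ):ℂ) * I = 0 := by
      push_cast
      linear_combination h1
    obtain ⟨hx, hy⟩ := ri_zero _ _ hcomb
    have hfield' : hX ≠ 0 ∨ hY ≠ 0 := by
      by_contra hcon
      push_neg at hcon
      exact hfield (by rw [hcon.1, hcon.2])
    rcases hfield' with h | h
    · have hx' : c p * hX = 0 := by linarith
      rcases mul_eq_zero.mp hx' with h' | h'
      · exact h'
      · exact absurd h' h
    · have hy' : c p * hY = 0 := by linarith
      rcases mul_eq_zero.mp hy' with h' | h'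
      · exact h'
      · exact absurd h' h
  intro i
  exact ⟨(hab i).1, (hab i).2, hc i⟩
end

section
/- In the rank-3 spin chain H = Σᵢ (J_X XᵢXᵢ₊₁ + J_Y YᵢYᵢ₊₁ + J_Z ZᵢZᵢ₊₁ + h_X Xᵢ + h_Y Yᵢ + h_Z Zᵢ) with all |J_X|, |J_Y|, |J_Z| nonzero and pairwise distinct, there is no nonzero 1-support conserved quantity: if Q = Σᵢ (aᵢ Xᵢ + bᵢ Yᵢ + cᵢ Zᵢ) satisfies [Q,H]=0 then all aᵢ = bᵢ = cᵢ = 0. -/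
open Complex
open scoped Classical

noncomputable def tp (N : ℕ) (u : Fin N → Matrix (Fin 2) (Fin 2) ℂ) :
    Matrix (Fin N → Fin 2) (Fin N → Fin 2) ℂ :=
  fun f g => ∏ k, u k (f k) (g k)

lemma pauliAt_eq_tp (N : ℕ) (i : Fin N) (M : Matrix (Fin 2) (Fin 2) ℂ) :
    pauliAt N i M = tp N (fun k => if k = i then M else 1) := by
  funext f g
  unfold pauliAt tp
  rw [Fintype.prod_eq_mul_prod_compl i]
  simp only [if_pos rfl]
  congr 1
  have : ∀ k ∈ ({i} : Finset (Fin N))ᶜ,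
      (if k = i then M else 1) (f k) (g k) = if f k = g k then 1 else 0 := by
    intro k hk
    simp only [Finset.mem_compl, Finset.mem_singleton] at hk
    simp [hk, Matrix.one_apply]
  rw [Finset.prod_congr rfl this, Finset.prod_boole]
  simp only [Finset.mem_compl, Finset.mem_singleton]

lemma tp_mul (N : ℕ) (u v : Fin N → Matrix (Fin 2) (Fin 2) ℂ) :
    tp N u * tp N v = tp N (fun k => u k * v k) := by
  funext f g
  simp only [tp, Matrix.mul_apply]
  have : ∀ h : Fin N → Fin 2,
      (∏ k, u k (f k) (h k)) * ∏ k, v k (h k) (g k)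
        = ∏ k, (u k (f k) (h k) * v k (h k) (g k)) := by
    intro h; rw [Finset.prod_mul_distrib]
  rw [Finset.sum_congr rfl (fun h _ => this h),
    Fintype.prod_sum (fun k j => u k (f k) j * v k j (g k))]

lemma trace_tp (N : ℕ) (u : Fin N → Matrix (Fin 2) (Fin 2) ℂ) :
    (tp N u).trace = ∏ k, (u k).trace := by
  simp only [Matrix.trace, Matrix.diag, tp]
  rw [Fintype.prod_sum (fun k j => u k j j)]

abbrev M2 := Matrix (Fin 2) (Fin 2) ℂ

noncomputable def d1 (N : ℕ) (j : Fin N) (A : M2) : Fin N → M2 :=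
  fun l => if l = j then A else 1

noncomputable def d2 (N : ℕ) (i j : Fin N) (P Q : M2) : Fin N → M2 :=
  fun l => if l = i then P else if l = j then Q else 1

variable {N : ℕ} [NeZero N]

lemma fin_add_ne (i d : Fin N) (hd : d ≠ 0) : i + d ≠ i := by
  intro h; exact hd (by simpa using h)

open Fin.NatCast in
lemma fin_one_ne_zero (hN : 3 ≤ N) : (1 : Fin N) ≠ 0 := by
  have h1 : ((1:ℕ) : Fin N) = 0 ↔ N ∣ 1 := Fin.natCast_eq_zero
  simp only [Nat.cast_one] at h1
  intro h
  have := Nat.le_of_dvd one_pos (h1.mp h); omega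

open Fin.NatCast in
lemma fin_two_ne_zero (hN : 3 ≤ N) : (2 : Fin N) ≠ 0 := by
  have h1 : ((2:ℕ) : Fin N) = 0 ↔ N ∣ 2 := Fin.natCast_eq_zero
  simp only [Nat.cast_ofNat] at h1
  intro h
  have := Nat.le_of_dvd (by norm_num) (h1.mp h); omega

noncomputable def Phi (i j k : Fin N) (P Q A B C : M2) : ℂ :=
  ∏ l, ((d2 N i (i+1) P Q l) * (d1 N j A l * d2 N k (k+1) B C l)).trace

noncomputable def Phi' (i j k : Fin N) (P Q A B C : M2) : ℂ :=
  ∏ l, ((d2 N i (i+1) P Q l) * (d2 N k (k+1) B C l * d1 N j A l)).trace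

lemma Phi_vanish (hN : 3 ≤ N) (i j k : Fin N)
    (hns : ¬(k = i ∧ (j = i ∨ j = i+1)))
    (P Q A B C : M2) (hP : P.trace = 0) (hQ : Q.trace = 0)
    (hA : A.trace = 0) (hB : B.trace = 0) (hC : C.trace = 0) :
    Phi i j k P Q A B C = 0 ∧ Phi' i j k P Q A B C = 0 := by
  have e1 : (1 : Fin N) ≠ 0 := fin_one_ne_zero hN
  have e2 : (2 : Fin N) ≠ 0 := fin_two_ne_zero hN
  have add2 : ∀ m : Fin N, m + 1 + 1 = m + 2 := fun m => by open Fin.CommRing in ring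
  have ne1 : ∀ m : Fin N, m + 1 ≠ m := fun m => fin_add_ne m 1 e1
  have ne2 : ∀ m : Fin N, m + 2 ≠ m := fun m => fin_add_ne m 2 e2
  push_neg at hns
  have key : ∃ l₀ : Fin N,
      (d2 N i (i+1) P Q l₀ = 1 ∧ (d1 N j A l₀ = 1 ∨ d2 N k (k+1) B C l₀ = 1)
        ∧ ((d1 N j A l₀ * d2 N k (k+1) B C l₀).trace = 0))
      ∨ (d1 N j A l₀ = 1 ∧ d2 N k (k+1) B C l₀ = 1 ∧ (d2 N i (i+1) P Q l₀).trace = 0) := by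
    by_cases hki : k = i
    · obtain ⟨hj1, hj2⟩ := hns hki
      refine ⟨j, Or.inl ⟨?_, Or.inr ?_, ?_⟩⟩
      · simp [d2, hj1, hj2]
      · subst hki; simp [d2, hj1, hj2]
      · subst hki; simp [d1, d2, hj1, hj2, hA]
    · by_cases hk1i : k + 1 = i
      · have hki1 : k ≠ i + 1 := by
          intro h; rw [h] at hk1i; rw [add2] at hk1i
          exact ne2 i hk1i
        by_cases hji1 : j = i + 1
        · refine ⟨k, Or.inl ⟨?_, Or.inl ?_, ?_⟩⟩
          · simp [d2, hki, hki1]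
          · simp [d1, hji1, hki1]
          · simp [d1, d2, hji1, hki1, hB]
        · refine ⟨i+1, Or.inr ⟨?_, ?_, ?_⟩⟩
          · simp [d1, Ne.symm hji1]
          · have h1 : i + 1 ≠ k := Ne.symm hki1
            have h2 : i + 1 ≠ k + 1 := by
              intro h; exact hki (by simpa using h.symm)
            simp [d2, h1, h2]
          · simp [d2, ne1 i, hQ]
      · by_cases hk2 : k = i + 1
        · by_cases hji : j = i
          · refine ⟨k+1, Or.inl ⟨?_, Or.inl ?_, ?_⟩⟩
            · have h1 : k + 1 ≠ i := by rw [hk2, add2]; exact ne2 i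
              have h2 : k + 1 ≠ i + 1 := by
                intro h; exact (ne1 i) (by simpa [hk2] using h)
              simp [d2, h1, h2]
            · have : k + 1 ≠ j := by
                rw [hk2, hji, add2]; exact ne2 i
              simp [d1, this]
            · have h3 : k + 1 ≠ j := by rw [hk2, hji, add2]; exact ne2 i
              have h4 : k + 1 ≠ k := ne1 k
              simp [d1, d2, h3, h4, hC]
          · refine ⟨i, Or.inr ⟨?_, ?_, ?_⟩⟩
            · simp [d1, (Ne.symm hji : ¬ i = j)]
            · have h1 : i ≠ k := Ne.symm hki
              have h2 : i ≠ k + 1 := fun h => hk1i h.symm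
              simp [d2, h1, h2]
            · simp [d2, hP]
        · by_cases hjk : j = k
          · refine ⟨k+1, Or.inl ⟨?_, Or.inl ?_, ?_⟩⟩
            · have h1 : k + 1 ≠ i := hk1i
              have h2 : k + 1 ≠ i + 1 := fun h => hki (by simpa using h)
              simp [d2, h1, h2]
            · have : k + 1 ≠ j := by rw [hjk]; exact ne1 k
              simp [d1, this]
            · have h3 : k + 1 ≠ j := by rw [hjk]; exact ne1 k
              simp [d1, d2, h3, ne1 k, hC]
          · refine ⟨k, Or.inl ⟨?_, Or.inl ?_, ?_⟩⟩
            · simp [d2, hki, hk2]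
            · simp [d1, (Ne.symm hjk : ¬ k = j)]
            · simp [d1, d2, (Ne.symm hjk : ¬ k = j), hB]
  obtain ⟨l₀, h⟩ := key
  constructor <;>
  · refine Finset.prod_eq_zero (Finset.mem_univ l₀) ?_
    rcases h with ⟨h1, _, h3⟩ | ⟨h1, h2, h3⟩
    · rw [h1, one_mul]
      first
      | exact h3
      | (rw [show (d2 N k (k+1) B C l₀ * d1 N j A l₀).trace
            = (d1 N j A l₀ * d2 N k (k+1) B C l₀).trace from Matrix.trace_mul_comm _ _]; exact h3)
    · rw [h1, h2]; simpa using h3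

noncomputable def Kc (N : ℕ) [NeZero N] (i : Fin N) : ℂ := ∏ l ∈ Finset.univ \ {i, i+1}, (2:ℂ)

lemma Kc_ne_zero (i : Fin N) : Kc N i ≠ 0 := by
  unfold Kc
  rw [Finset.prod_ne_zero_iff]
  intro _ _; norm_num

lemma prod_two_sites (i : Fin N) (hne : i + 1 ≠ i) (f : Fin N → ℂ) (x y : ℂ)
    (hx : f i = x) (hy : f (i+1) = y) (h : ∀ l, l ≠ i → l ≠ i+1 → f l = 2) :
    ∏ l, f l = x * y * Kc N i := by
  rw [← Finset.prod_sdiff (Finset.subset_univ ({i, i+1} : Finset (Fin N)))]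
  rw [Finset.prod_pair (Ne.symm hne)]
  rw [hx, hy]
  have : ∏ l ∈ Finset.univ \ {i, i+1}, f l = Kc N i := by
    unfold Kc
    apply Finset.prod_congr rfl
    intro l hl
    simp only [Finset.mem_sdiff, Finset.mem_insert, Finset.mem_singleton] at hl
    push_neg at hl
    exact h l hl.2.1 hl.2.2
  rw [this]; ring

lemma Phi_ii (hN : 3 ≤ N) (i : Fin N) (P Q A B C : M2) :
    Phi i i i P Q A B C = (P*(A*B)).trace * (Q*C).trace * Kc N i := by
  have e1 : (1 : Fin N) ≠ 0 := fin_one_ne_zero hN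
  have ne1 : ∀ m : Fin N, m + 1 ≠ m := fun m => fin_add_ne m 1 e1
  have ne1' : ∀ m : Fin N, m ≠ m + 1 := fun m => Ne.symm (ne1 m)
  apply prod_two_sites i (ne1 i)
  · simp [d1, d2, ne1 i, ne1' i, (show N ≠ 1 by omega)]
  · simp [d1, d2, ne1 i, ne1' i, (show N ≠ 1 by omega)]
  · intro l h1 h2
    simp [d1, d2, h1, h2, Matrix.trace_one]

lemma Phi'_ii (hN : 3 ≤ N) (i : Fin N) (P Q A B C : M2) :
    Phi' i i i P Q A B C = (P*(B*A)).trace * (Q*C).trace * Kc N i := by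
  have e1 : (1 : Fin N) ≠ 0 := fin_one_ne_zero hN
  have ne1 : ∀ m : Fin N, m + 1 ≠ m := fun m => fin_add_ne m 1 e1
  have ne1' : ∀ m : Fin N, m ≠ m + 1 := fun m => Ne.symm (ne1 m)
  apply prod_two_sites i (ne1 i)
  · simp [d1, d2, ne1 i, ne1' i, (show N ≠ 1 by omega)]
  · simp [d1, d2, ne1 i, ne1' i, (show N ≠ 1 by omega)]
  · intro l h1 h2
    simp [d1, d2, h1, h2, Matrix.trace_one]

lemma Phi_i1i (hN : 3 ≤ N) (i : Fin N) (P Q A B C : M2) :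
    Phi i (i+1) i P Q A B C = (P*B).trace * (Q*(A*C)).trace * Kc N i := by
  have e1 : (1 : Fin N) ≠ 0 := fin_one_ne_zero hN
  have ne1 : ∀ m : Fin N, m + 1 ≠ m := fun m => fin_add_ne m 1 e1
  have ne1' : ∀ m : Fin N, m ≠ m + 1 := fun m => Ne.symm (ne1 m)
  apply prod_two_sites i (ne1 i)
  · simp [d1, d2, ne1 i, ne1' i, (show N ≠ 1 by omega)]
  · simp [d1, d2, ne1 i, ne1' i, (show N ≠ 1 by omega)]
  · intro l h1 h2
    simp [d1, d2, h1, h2, Matrix.trace_one]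

lemma Phi'_i1i (hN : 3 ≤ N) (i : Fin N) (P Q A B C : M2) :
    Phi' i (i+1) i P Q A B C = (P*B).trace * (Q*(C*A)).trace * Kc N i := by
  have e1 : (1 : Fin N) ≠ 0 := fin_one_ne_zero hN
  have ne1 : ∀ m : Fin N, m + 1 ≠ m := fun m => fin_add_ne m 1 e1
  have ne1' : ∀ m : Fin N, m ≠ m + 1 := fun m => Ne.symm (ne1 m)
  apply prod_two_sites i (ne1 i)
  · simp [d1, d2, ne1 i, ne1' i, (show N ≠ 1 by omega)]
  · simp [d1, d2, ne1 i, ne1' i, (show N ≠ 1 by omega)]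
  · intro l h1 h2
    simp [d1, d2, h1, h2, Matrix.trace_one]

noncomputable def Psi {N : ℕ} [NeZero N] (i j k : Fin N) (P Q A B : M2) : ℂ :=
  ∏ l, ((d2 N i (i+1) P Q l) * (d1 N j A l * d1 N k B l)).trace

noncomputable def Tt (N : ℕ) [NeZero N] (i : Fin N) (P Q : M2) :
    Matrix (Fin N → Fin 2) (Fin N → Fin 2) ℂ :=
  tp N (d2 N i (i+1) P Q)

variable {N : ℕ} [NeZero N]

lemma d1_mul_d1 (k : Fin N) (hkk : k ≠ k + 1) (B C : M2) :
    (fun l => d1 N k B l * d1 N (k+1) C l) = d2 N k (k+1) B C := by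
  funext l
  by_cases h1 : l = k
  · simp [d1, d2, h1, hkk]
  · by_cases h2 : l = k + 1
    · simp [d1, d2, h1, h2, Ne.symm hkk]
    · simp [d1, d2, h1, h2]

lemma Tt_eq (i : Fin N) (hii : i ≠ i + 1) (P Q : M2) :
    Tt N i P Q = pauliAt N i P * pauliAt N (i+1) Q := by
  rw [pauliAt_eq_tp, pauliAt_eq_tp, tp_mul, Tt]
  exact congrArg (tp N) (d1_mul_d1 i hii P Q).symm

lemma tr1 (i j k : Fin N) (hkk : k ≠ k + 1) (P Q A B C : M2) :
    (Tt N i P Q * (pauliAt N j A * (pauliAt N k B * pauliAt N (k+1) C))).trace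
      = Phi i j k P Q A B C := by
  rw [pauliAt_eq_tp, pauliAt_eq_tp, pauliAt_eq_tp, tp_mul, Tt, tp_mul, tp_mul, trace_tp]
  unfold Phi
  apply Finset.prod_congr rfl
  intro l _
  have := congrFun (d1_mul_d1 k hkk B C) l
  simp only [d1] at this ⊢
  rw [this]

lemma tr1' (i j k : Fin N) (hkk : k ≠ k + 1) (P Q A B C : M2) :
    (Tt N i P Q * ((pauliAt N k B * pauliAt N (k+1) C) * pauliAt N j A)).trace
      = Phi' i j k P Q A B C := by
  rw [pauliAt_eq_tp, pauliAt_eq_tp, pauliAt_eq_tp, tp_mul, Tt, tp_mul, tp_mul, trace_tp]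
  unfold Phi'
  apply Finset.prod_congr rfl
  intro l _
  have := congrFun (d1_mul_d1 k hkk B C) l
  simp only [d1] at this ⊢
  rw [this]

lemma tr2 (i j k : Fin N) (P Q A B : M2) :
    (Tt N i P Q * (pauliAt N j A * pauliAt N k B)).trace = Psi i j k P Q A B := by
  rw [pauliAt_eq_tp, pauliAt_eq_tp, Tt, tp_mul, tp_mul, trace_tp]
  unfold Psi
  apply Finset.prod_congr rfl
  intro l _
  simp only [d1, d2]

lemma Psi_cancel (hN : 3 ≤ N) (i j k : Fin N) (P Q A B : M2)
    (hP : P.trace = 0) (hQ : Q.trace = 0) :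
    Psi i j k P Q A B = Psi i k j P Q B A := by
  have e1 : (1 : Fin N) ≠ 0 := fin_one_ne_zero hN
  have ne1 : ∀ m : Fin N, m + 1 ≠ m := fun m => fin_add_ne m 1 e1
  by_cases hjk : j = k
  · subst hjk
    by_cases hji : j = i
    · subst hji
      unfold Psi
      rw [Finset.prod_eq_zero (Finset.mem_univ (j+1)), Finset.prod_eq_zero (Finset.mem_univ (j+1))]
      · simp [d1, d2, ne1 j, hQ]
      · simp [d1, d2, ne1 j, hQ]
    · by_cases hji1 : j = i + 1
      · subst hji1
        unfold Psi
        rw [Finset.prod_eq_zero (Finset.mem_univ i), Finset.prod_eq_zero (Finset.mem_univ i)]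
        · simp [d1, d2, Ne.symm (ne1 i), hP]
        · simp [d1, d2, Ne.symm (ne1 i), hP]
      · unfold Psi
        apply Finset.prod_congr rfl
        intro l _
        by_cases hlj : l = j
        · subst hlj
          simp only [d1, d2, if_pos rfl, if_neg hji, if_neg hji1, one_mul]
          rw [Matrix.trace_mul_comm]
        · simp [d1, hlj]
  · unfold Psi
    apply Finset.prod_congr rfl
    intro l _
    by_cases hlj : l = j
    · subst hlj
      simp [d1, hjk, Ne.symm hjk]
    · by_cases hlk : l = k
      · subst hlk
        simp [d1, hlj, hjk, Ne.symm hjk]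
      · simp [d1, hlj, hlk]

lemma Psi_ii (hN : 3 ≤ N) (i : Fin N) (P Q A B : M2) (hQ : Q.trace = 0) :
    Psi i i i P Q A B = 0 := by
  have e1 : (1 : Fin N) ≠ 0 := fin_one_ne_zero hN
  have ne1 : ∀ m : Fin N, m + 1 ≠ m := fun m => fin_add_ne m 1 e1
  unfold Psi
  rw [Finset.prod_eq_zero (Finset.mem_univ (i+1))]
  simp [d1, d2, ne1 i, hQ]

lemma Psi_i1i (hN : 3 ≤ N) (i : Fin N) (P Q A B : M2) :
    Psi i (i+1) i P Q A B = (P*B).trace * (Q*A).trace * Kc N i := by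
  have e1 : (1 : Fin N) ≠ 0 := fin_one_ne_zero hN
  have ne1 : ∀ m : Fin N, m + 1 ≠ m := fun m => fin_add_ne m 1 e1
  have ne1' : ∀ m : Fin N, m ≠ m + 1 := fun m => Ne.symm (ne1 m)
  apply prod_two_sites i (ne1 i)
  · simp [d1, d2, ne1 i, ne1' i]
  · simp [d1, d2, ne1 i, ne1' i]
  · intro l h1 h2
    simp [d1, d2, h1, h2, Matrix.trace_one]

lemma Psi_ii1 (hN : 3 ≤ N) (i : Fin N) (P Q A B : M2) :
    Psi i i (i+1) P Q A B = (P*A).trace * (Q*B).trace * Kc N i := by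
  have e1 : (1 : Fin N) ≠ 0 := fin_one_ne_zero hN
  have ne1 : ∀ m : Fin N, m + 1 ≠ m := fun m => fin_add_ne m 1 e1
  have ne1' : ∀ m : Fin N, m ≠ m + 1 := fun m => Ne.symm (ne1 m)
  apply prod_two_sites i (ne1 i)
  · simp [d1, d2, ne1 i, ne1' i]
  · simp [d1, d2, ne1 i, ne1' i]
  · intro l h1 h2
    simp [d1, d2, h1, h2, Matrix.trace_one]
noncomputable def Wc (P Q A B : M2) (J : ℂ) : ℂ :=
  J * (((P*(A*B)).trace - (P*(B*A)).trace) * (Q*B).trace)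
noncomputable def Wc' (P Q A B : M2) (J : ℂ) : ℂ :=
  J * ((P*B).trace * ((Q*(A*B)).trace - (Q*(B*A)).trace))

lemma trace_σx : σx.trace = 0 := by simp [σx, Matrix.trace_fin_two]
lemma trace_σy : σy.trace = 0 := by simp [σy, Matrix.trace_fin_two]
lemma trace_σz : σz.trace = 0 := by simp [σz, Matrix.trace_fin_two]

lemma master (hN : 3 ≤ N) (i : Fin N)
    (P Q : M2) (hP : P.trace = 0) (hQ : Q.trace = 0)
    (JX JY JZ hX hY hZ : ℝ) (a b c : Fin N → ℝ)
    (H : Matrix (Fin N → Fin 2) (Fin N → Fin 2) ℂ)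
    (hH : H = ∑ i : Fin N,
      ((JX : ℂ) • (pauliAt N i σx * pauliAt N (i + 1) σx)
        + (JY : ℂ) • (pauliAt N i σy * pauliAt N (i + 1) σy)
        + (JZ : ℂ) • (pauliAt N i σz * pauliAt N (i + 1) σz)
        + (hX : ℂ) • pauliAt N i σx + (hY : ℂ) • pauliAt N i σy
        + (hZ : ℂ) • pauliAt N i σz))
    (Qm : Matrix (Fin N → Fin 2) (Fin N → Fin 2) ℂ)
    (hQm : Qm = ∑ i : Fin N,
      ((a i : ℂ) • pauliAt N i σx + (b i : ℂ) • pauliAt N i σy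
        + (c i : ℂ) • pauliAt N i σz))
    (hcomm : Qm * H = H * Qm) :
    (a i : ℂ) * (Wc P Q σx σx JX + Wc P Q σx σy JY + Wc P Q σx σz JZ)
      + (b i : ℂ) * (Wc P Q σy σx JX + Wc P Q σy σy JY + Wc P Q σy σz JZ)
      + (c i : ℂ) * (Wc P Q σz σx JX + Wc P Q σz σy JY + Wc P Q σz σz JZ)
      + (a (i+1) : ℂ) * (Wc' P Q σx σx JX + Wc' P Q σx σy JY + Wc' P Q σx σz JZ)
      + (b (i+1) : ℂ) * (Wc' P Q σy σx JX + Wc' P Q σy σy JY + Wc' P Q σy σz JZ)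
      + (c (i+1) : ℂ) * (Wc' P Q σz σx JX + Wc' P Q σz σy JY + Wc' P Q σz σz JZ) = 0 := by
  have e1 : (1 : Fin N) ≠ 0 := fin_one_ne_zero hN
  have ne1 : ∀ m : Fin N, m + 1 ≠ m := fun m => fin_add_ne m 1 e1
  have ne1' : ∀ m : Fin N, m ≠ m + 1 := fun m => Ne.symm (ne1 m)
  subst hH hQm
  -- the per-pair term
  set qf : Fin N → Matrix (Fin N → Fin 2) (Fin N → Fin 2) ℂ := fun j =>
    (a j : ℂ) • pauliAt N j σx + (b j : ℂ) • pauliAt N j σy + (c j : ℂ) • pauliAt N j σz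
    with hqf
  set hf : Fin N → Matrix (Fin N → Fin 2) (Fin N → Fin 2) ℂ := fun k =>
    (JX : ℂ) • (pauliAt N k σx * pauliAt N (k + 1) σx)
      + (JY : ℂ) • (pauliAt N k σy * pauliAt N (k + 1) σy)
      + (JZ : ℂ) • (pauliAt N k σz * pauliAt N (k + 1) σz)
      + (hX : ℂ) • pauliAt N k σx + (hY : ℂ) • pauliAt N k σy
      + (hZ : ℂ) • pauliAt N k σz
    with hhf
  set D : Fin N → Fin N → ℂ := fun j k =>
    (Tt N i P Q * (qf j * hf k)).trace - (Tt N i P Q * (hf k * qf j)).trace with hD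
  have h0 : ∑ j : Fin N, ∑ k : Fin N, D j k = 0 := by
    have e : ∑ j : Fin N, ∑ k : Fin N, (Tt N i P Q * (qf j * hf k)).trace
        = ∑ j : Fin N, ∑ k : Fin N, (Tt N i P Q * (hf k * qf j)).trace := by
      calc ∑ j : Fin N, ∑ k : Fin N, (Tt N i P Q * (qf j * hf k)).trace
          = (Tt N i P Q * ((∑ j : Fin N, qf j) * (∑ k : Fin N, hf k))).trace := by
            rw [Finset.sum_mul_sum]
            simp only [Matrix.mul_sum, Matrix.trace_sum]
        _ = (Tt N i P Q * ((∑ k : Fin N, hf k) * (∑ j : Fin N, qf j))).trace := by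
            rw [hcomm]
        _ = ∑ k : Fin N, ∑ j : Fin N, (Tt N i P Q * (hf k * qf j)).trace := by
            rw [Finset.sum_mul_sum]
            simp only [Matrix.mul_sum, Matrix.trace_sum]
        _ = ∑ j : Fin N, ∑ k : Fin N, (Tt N i P Q * (hf k * qf j)).trace := Finset.sum_comm
    simp only [hD, Finset.sum_sub_distrib]
    rw [e, sub_self]
  -- vanishing off the special pairs
  have hvan : ∀ j k : Fin N, ¬(k = i ∧ (j = i ∨ j = i+1)) → D j k = 0 := by
    intro j k hns
    have hv1 : ∀ A B C : M2, A.trace = 0 → B.trace = 0 → C.trace = 0 →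
        Phi i j k P Q A B C = 0 :=
      fun A B C hA hB hC => (Phi_vanish hN i j k hns P Q A B C hP hQ hA hB hC).1
    have hv2 : ∀ A B C : M2, A.trace = 0 → B.trace = 0 → C.trace = 0 →
        Phi' i j k P Q A B C = 0 :=
      fun A B C hA hB hC => (Phi_vanish hN i j k hns P Q A B C hP hQ hA hB hC).2
    have hpsi : ∀ A B : M2, Psi i j k P Q A B = Psi i k j P Q B A :=
      fun A B => Psi_cancel hN i j k P Q A B hP hQ
    simp only [hD, hqf, hhf, mul_add, add_mul, smul_mul_assoc, mul_smul_comm,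
      Matrix.mul_smul, Matrix.smul_mul, Matrix.trace_smul, Matrix.trace_add,
      smul_eq_mul, tr1 i j k (ne1' k), tr1' i j k (ne1' k), tr2,
      hv1, hv2, trace_σx, trace_σy, trace_σz, hpsi]
    ring
  have hcol : D i i + D (i+1) i = 0 := by
    rw [← h0]
    have hin : ∀ j, ∑ k : Fin N, D j k = D j i := by
      intro j
      refine Finset.sum_eq_single i (fun k _ hk => hvan j k (fun hc => hk hc.1)) ?_
      intro h; exact absurd (Finset.mem_univ i) h
    rw [Finset.sum_congr rfl (fun j _ => hin j)]
    rw [← Finset.sum_subset (Finset.subset_univ ({i, i+1} : Finset (Fin N)))]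
    · rw [Finset.sum_pair (ne1' i)]
    · intro j _ hj
      simp only [Finset.mem_insert, Finset.mem_singleton] at hj
      push_neg at hj
      exact hvan j i (fun hc => by rcases hc.2 with h | h; exact hj.1 h; exact hj.2 h)
  -- evaluate the two surviving terms
  have hpsii : ∀ A B : M2, Psi i i i P Q A B = 0 := fun A B => Psi_ii hN i P Q A B hQ
  have expii : D i i = ((a i : ℂ) * (Wc P Q σx σx JX + Wc P Q σx σy JY + Wc P Q σx σz JZ)
      + (b i : ℂ) * (Wc P Q σy σx JX + Wc P Q σy σy JY + Wc P Q σy σz JZ)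
      + (c i : ℂ) * (Wc P Q σz σx JX + Wc P Q σz σy JY + Wc P Q σz σz JZ)) * Kc N i := by
    simp only [hD, hqf, hhf, mul_add, add_mul, smul_mul_assoc, mul_smul_comm,
      Matrix.mul_smul, Matrix.smul_mul, Matrix.trace_smul, Matrix.trace_add,
      smul_eq_mul, tr1 i i i (ne1' i), tr1' i i i (ne1' i), tr2,
      Phi_ii hN i, Phi'_ii hN i, hpsii, Wc, Wc']
    ring
  have expi1 : D (i+1) i = ((a (i+1) : ℂ) * (Wc' P Q σx σx JX + Wc' P Q σx σy JY + Wc' P Q σx σz JZ)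
      + (b (i+1) : ℂ) * (Wc' P Q σy σx JX + Wc' P Q σy σy JY + Wc' P Q σy σz JZ)
      + (c (i+1) : ℂ) * (Wc' P Q σz σx JX + Wc' P Q σz σy JY + Wc' P Q σz σz JZ)) * Kc N i := by
    simp only [hD, hqf, hhf, mul_add, add_mul, smul_mul_assoc, mul_smul_comm,
      Matrix.mul_smul, Matrix.smul_mul, Matrix.trace_smul, Matrix.trace_add,
      smul_eq_mul, tr1 i (i+1) i (ne1' i), tr1' i (i+1) i (ne1' i), tr2,
      Phi_i1i hN i, Phi'_i1i hN i, Psi_i1i hN i, Psi_ii1 hN i, Wc, Wc']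
    ring
  have hfin : ((a i : ℂ) * (Wc P Q σx σx JX + Wc P Q σx σy JY + Wc P Q σx σz JZ)
      + (b i : ℂ) * (Wc P Q σy σx JX + Wc P Q σy σy JY + Wc P Q σy σz JZ)
      + (c i : ℂ) * (Wc P Q σz σx JX + Wc P Q σz σy JY + Wc P Q σz σz JZ)
      + (a (i+1) : ℂ) * (Wc' P Q σx σx JX + Wc' P Q σx σy JY + Wc' P Q σx σz JZ)
      + (b (i+1) : ℂ) * (Wc' P Q σy σx JX + Wc' P Q σy σy JY + Wc' P Q σy σz JZ)
      + (c (i+1) : ℂ) * (Wc' P Q σz σx JX + Wc' P Q σz σy JY + Wc' P Q σz σz JZ)) * Kc N i = 0 := by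
    rw [← hcol, expii, expi1]; ring
  rcases mul_eq_zero.mp hfin with h | h
  · exact h
  · exact absurd h (Kc_ne_zero i)
set_option maxHeartbeats 2000000 in
theorem rank3_distinct_couplings_no_one_support_conserved
    (N : ℕ) [NeZero N] (hN : 3 ≤ N) (JX JY JZ hX hY hZ : ℝ)
    (hJX : JX ≠ 0) (hJY : JY ≠ 0) (hJZ : JZ ≠ 0)
    (hXY : |JX| ≠ |JY|) (hYZ : |JY| ≠ |JZ|) (hZX : |JZ| ≠ |JX|)
    (a b c : Fin N → ℝ)
    (H : Matrix (Fin N → Fin 2) (Fin N → Fin 2) ℂ)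
    (hH : H = ∑ i : Fin N,
      ((JX : ℂ) • (pauliAt N i σx * pauliAt N (i + 1) σx)
        + (JY : ℂ) • (pauliAt N i σy * pauliAt N (i + 1) σy)
        + (JZ : ℂ) • (pauliAt N i σz * pauliAt N (i + 1) σz)
        + (hX : ℂ) • pauliAt N i σx + (hY : ℂ) • pauliAt N i σy
        + (hZ : ℂ) • pauliAt N i σz))
    (Q : Matrix (Fin N → Fin 2) (Fin N → Fin 2) ℂ)
    (hQ : Q = ∑ i : Fin N,
      ((a i : ℂ) • pauliAt N i σx + (b i : ℂ) • pauliAt N i σy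
        + (c i : ℂ) • pauliAt N i σz))
    (hcomm : Q * H = H * Q) :
    ∀ i : Fin N, a i = 0 ∧ b i = 0 ∧ c i = 0 := by
  have sqne : ∀ u v : ℝ, |u| ≠ |v| → u^2 - v^2 ≠ 0 := by
    intro u v huv hc
    apply huv
    rcases mul_eq_zero.mp (show (u - v) * (u + v) = 0 by linear_combination hc) with h | h
    · rw [show u = v by linarith]
    · rw [show u = -v by linarith, abs_neg]
  intro i
  have E1 := master hN i σz σy trace_σz trace_σy JX JY JZ hX hY hZ a b c H hH Q hQ hcomm
  have E2 := master hN i σy σz trace_σy trace_σz JX JY JZ hX hY hZ a b c H hH Q hQ hcomm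
  have E3 := master hN i σz σx trace_σz trace_σx JX JY JZ hX hY hZ a b c H hH Q hQ hcomm
  have E4 := master hN i σx σz trace_σx trace_σz JX JY JZ hX hY hZ a b c H hH Q hQ hcomm
  have E5 := master hN i σy σx trace_σy trace_σx JX JY JZ hX hY hZ a b c H hH Q hQ hcomm
  have E6 := master hN i σx σy trace_σx trace_σy JX JY JZ hX hY hZ a b c H hH Q hQ hcomm
  simp only [Wc, Wc'] at E1 E2 E3 E4 E5 E6
  simp [σx, σy, σz, Matrix.mul_fin_two, Matrix.trace_fin_two] at E1
  simp [σx, σy, σz, Matrix.mul_fin_two, Matrix.trace_fin_two] at E2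
  simp [σx, σy, σz, Matrix.mul_fin_two, Matrix.trace_fin_two] at E3
  simp [σx, σy, σz, Matrix.mul_fin_two, Matrix.trace_fin_two] at E4
  simp [σx, σy, σz, Matrix.mul_fin_two, Matrix.trace_fin_two] at E5
  simp [σx, σy, σz, Matrix.mul_fin_two, Matrix.trace_fin_two] at E6
  have hI : (8 * Complex.I : ℂ) ≠ 0 := by
    simp [Complex.I_ne_zero]
  have cast0 : ∀ u v : ℝ, ((u - v : ℝ) : ℂ) * (8 * Complex.I) = 0 → u - v = 0 := by
    intro u v h
    rcases mul_eq_zero.mp h with h | h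
    · exact_mod_cast h
    · exact absurd h hI
  have r1 : a i * JY - a (i+1) * JZ = 0 := by
    apply cast0; push_cast; linear_combination E1
  have r2 : a i * JZ - a (i+1) * JY = 0 := by
    apply cast0; push_cast; linear_combination -E2
  have r3 : b i * JX - b (i+1) * JZ = 0 := by
    apply cast0; push_cast; linear_combination -E3
  have r4 : b i * JZ - b (i+1) * JX = 0 := by
    apply cast0; push_cast; linear_combination E4
  have r5 : c i * JX - c (i+1) * JY = 0 := by
    apply cast0; push_cast; linear_combination E5
  have r6 : c i * JY - c (i+1) * JX = 0 := by
    apply cast0; push_cast; linear_combination -E6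
  refine ⟨?_, ?_, ?_⟩
  · have h : a i * (JY^2 - JZ^2) = 0 := by linear_combination JY * r1 - JZ * r2
    exact (mul_eq_zero.mp h).resolve_right (sqne JY JZ hYZ)
  · have h : b i * (JX^2 - JZ^2) = 0 := by linear_combination JX * r3 - JZ * r4
    exact (mul_eq_zero.mp h).resolve_right (sqne JX JZ (fun hc => hZX hc.symm))
  · have h : c i * (JX^2 - JY^2) = 0 := by linear_combination JX * r5 - JY * r6
    exact (mul_eq_zero.mp h).resolve_right (sqne JX JY hXY)
end
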